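/- arXiv:2310.01367 — 2 statements merged into one kernel-verified Lean document; each statement's English description precedes it below -/
import Mathlib

section
/- Suppose the stationary measure ℙ satisfies conditions ID (with sequence (k_n)), FE and SE (with constants γ_+ < 0 and γ_- < 0). Fix ε ∈ (0,1/2), 0 < α < γ_+/(8γ_-), y ∈ supp ℙ, and consider the block auxiliary parsing of y_1^N; suppose the s-th block of y_1^N is good. Then, with ℓ_+ := 2 ln N/(−γ_+) and d_+ := 2N^α/ℓ_-, for all N large enough, for any ℓ ∈ ℕ, K ∈ {1,…,ℓ} and m ∈ ℕ, ℙ{x : #{j : y^{(j,s,N)} = x_{K+rℓ}^{K+rℓ+ℓ−1} for some r ∈ {0,1,…,⌊(N−K+1)/ℓ⌋−1}} = m} ≤ binom(d_+, m) · e^{m k_{ℓ_+}} · N^{−mε}. -/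
open MeasureTheory Filter Asymptotics
open scoped ENNReal Classical

noncomputable section

namespace ZM

/-- The left shift on one-sided sequences. -/
def shift {A : Type*} (x : ℕ → A) : ℕ → A := fun k => x (k + 1)

/-- The cylinder set of all sequences starting with the word `a`. -/
def cyl {A : Type*} {n : ℕ} (a : Fin n → A) : Set (ℕ → A) := {x | ∀ i : Fin n, x i = a i}

/-- The word `x_{p+1}^{p+ℓ}` of `x` (0-based: the letters at positions `p, …, p+ℓ-1`). -/
def seg {A : Type*} (y : ℕ → A) (p ℓ : ℕ) : Fin ℓ → A := fun i => y (p + i)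

/-- `w` occurs in `x` at (0-based) offset `r`. -/
def matchAt {A : Type*} (x : ℕ → A) {ℓ : ℕ} (w : Fin ℓ → A) (r : ℕ) : Prop :=
  ∀ i : Fin ℓ, x (r + i) = w i

/-- `w` appears as a substring of `x_1^N`. -/
def appears {A : Type*} (N : ℕ) (x : ℕ → A) {ℓ : ℕ} (w : Fin ℓ → A) : Prop :=
  ∃ r, r + ℓ ≤ N ∧ matchAt x w r

/-- The waiting time `W_ℓ(w, x)`: the least (1-based) position at which `w` occurs in `x`,
`⊤` if `w` never occurs. -/
def W {A : Type*} {ℓ : ℕ} (w : Fin ℓ → A) (x : ℕ → A) : ℕ∞ :=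
  sInf {r : ℕ∞ | ∃ n : ℕ, r = (n : ℕ∞) ∧ 1 ≤ n ∧ matchAt x w (n - 1)}

section ZMparsing

variable {A : Type*}

/-- Length of the Ziv–Merhav word starting at (0-based) position `p` of `y_1^N`, with
database `x_1^N`: the longest prefix of the remaining portion of `y_1^N` appearing as a
substring of `x_1^N`, or a single letter if there is no such prefix. -/
def zmLen (N : ℕ) (x y : ℕ → A) (p : ℕ) : ℕ :=
  max 1 (sSup {ℓ | p + ℓ ≤ N ∧ appears N x (seg y p ℓ)})

/-- Starting position of the `j`-th (0-based) word of the Ziv–Merhav parsing. -/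
def zmPos (N : ℕ) (x y : ℕ → A) : ℕ → ℕ
  | 0 => 0
  | j + 1 => zmPos N x y j + zmLen N x y (zmPos N x y j)

/-- `c_N(y|x)`: the number of words in the Ziv–Merhav parsing of `y_1^N` w.r.t. `x_1^N`. -/
def cN (N : ℕ) (x y : ℕ → A) : ℕ := sInf {c | N ≤ zmPos N x y c}

/-- The Ziv–Merhav estimator `Q̂_N(y, x) = c_N(y|x) ln N / N`. -/
def ZMest (N : ℕ) (x y : ℕ → A) : ℝ := (cN N x y : ℝ) * Real.log N / N

end ZMparsing

section MeasureDefs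

variable {A : Type*} [MeasurableSpace A]

/-- The measure of the cylinder of a word, as a real number. -/
def wp (μ : Measure (ℕ → A)) {n : ℕ} (a : Fin n → A) : ℝ := (μ (cyl a)).toReal

/-- `supp ℙ`: the set of sequences all of whose prefixes have positive measure. -/
def suppSet (μ : Measure (ℕ → A)) : Set (ℕ → A) := {x | ∀ n, 0 < μ (cyl (seg x 0 n))}

/-- Condition (ID): immediate decoupling on the support, with sequence `k`. -/
def CondID (μ : Measure (ℕ → A)) (k : ℕ → ℝ) : Prop :=
  Monotone k ∧ (k =o[atTop] fun n => (n : ℝ)) ∧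
    ∀ (n m : ℕ) (a : Fin n → A) (b : Fin m → A), 0 < μ (cyl a) → 0 < μ (cyl b) →
      wp μ (Fin.append a b) ≤ Real.exp (k n) * (wp μ a * wp μ b) ∧
      (0 < μ (cyl (Fin.append a b)) →
        Real.exp (-k n) * (wp μ a * wp μ b) ≤ wp μ (Fin.append a b))

/-- Condition (FE): fast enough decay, with rate `γp < 0`. -/
def CondFE (μ : Measure (ℕ → A)) (γp : ℝ) : Prop :=
  γp < 0 ∧ ∀ᶠ n : ℕ in atTop, ∀ a : Fin n → A, 0 < μ (cyl a) → wp μ a ≤ Real.exp (γp * n)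

/-- Condition (SE): slow enough decay, with rate `γm < 0`. -/
def CondSE (μ : Measure (ℕ → A)) (γm : ℝ) : Prop :=
  γm < 0 ∧ ∀ᶠ n : ℕ in atTop, ∀ a : Fin n → A, 0 < μ (cyl a) → Real.exp (γm * n) ≤ wp μ a

/-- Condition (KB): Kontoyiannis' bound on waiting times, with sequences `k`, `τ`. -/
def CondKB (μ : Measure (ℕ → A)) (k τ : ℕ → ℝ) : Prop :=
  (k =o[atTop] fun n => (n : ℝ)) ∧ (τ =o[atTop] fun n => (n : ℝ)) ∧
    ∀ (ℓ : ℕ) (a : Fin ℓ → A) (r : ℕ),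
      (μ {x | (r : ℕ∞) ≤ W a x}).toReal ≤
        Real.exp (-(Real.exp (-k ℓ) * wp μ a * (⌊((r : ℝ) - 1) / ((ℓ : ℝ) + τ ℓ)⌋ : ℝ)))

/-- Length of the next word of the auxiliary parsing of `y_1^N` starting at position `p`:
the shortest prefix of the remaining portion of `y_1^N` with measure at most `θ`, or the
whole remaining portion if there is no such prefix. -/
def auxLen (μ : Measure (ℕ → A)) (θ : ℝ) (N : ℕ) (y : ℕ → A) (p : ℕ) : ℕ :=
  if ∃ ℓ, 1 ≤ ℓ ∧ p + ℓ ≤ N ∧ wp μ (seg y p ℓ) ≤ θ then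
    sInf {ℓ | 1 ≤ ℓ ∧ p + ℓ ≤ N ∧ wp μ (seg y p ℓ) ≤ θ}
  else N - p

/-- Starting position of the `j`-th (0-based) word of the auxiliary parsing. -/
def auxPos (μ : Measure (ℕ → A)) (θ : ℝ) (N : ℕ) (y : ℕ → A) : ℕ → ℕ
  | 0 => 0
  | j + 1 => auxPos μ θ N y j + max 1 (auxLen μ θ N y (auxPos μ θ N y j))

/-- Length of the `j`-th (0-based) word of the auxiliary parsing. -/
def auxWordLen (μ : Measure (ℕ → A)) (θ : ℝ) (N : ℕ) (y : ℕ → A) (j : ℕ) : ℕ :=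
  max 1 (auxLen μ θ N y (auxPos μ θ N y j))

/-- The number of words in the auxiliary parsing of `y_1^N`. -/
def auxCount (μ : Measure (ℕ → A)) (θ : ℝ) (N : ℕ) (y : ℕ → A) : ℕ :=
  sInf {c | N ≤ auxPos μ θ N y c}

/-- Length of the next word of the block parsing within a block ending at position `e`:
the shortest prefix of the remaining portion of the block with measure at most `θ`;
`0` encodes that no such prefix exists (the rest of the block is the buffer). -/
def blkLen (μ : Measure (ℕ → A)) (θ : ℝ) (e : ℕ) (y : ℕ → A) (p : ℕ) : ℕ :=
  sInf {ℓ | 1 ≤ ℓ ∧ p + ℓ ≤ e ∧ wp μ (seg y p ℓ) ≤ θ}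

/-- Starting position of the `i`-th (0-based) word of the block starting at `q`, ending at `e`. -/
def blkPos (μ : Measure (ℕ → A)) (θ : ℝ) (e : ℕ) (y : ℕ → A) (q : ℕ) : ℕ → ℕ
  | 0 => q
  | i + 1 => blkPos μ θ e y q i + blkLen μ θ e y (blkPos μ θ e y q i)

/-- Number `d_s` of words in the block starting at `q` and ending at `e`. -/
def dCount (μ : Measure (ℕ → A)) (θ : ℝ) (e : ℕ) (y : ℕ → A) (q : ℕ) : ℕ :=
  sInf {i | blkLen μ θ e y (blkPos μ θ e y q i) = 0}

/-- The block starting at `q` and ending at `e` is good: its parsed words are pairwise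
distinct. -/
def GoodBlock (μ : Measure (ℕ → A)) (θ : ℝ) (e : ℕ) (y : ℕ → A) (q : ℕ) : Prop :=
  ∀ i j : ℕ, i < dCount μ θ e y q → j < dCount μ θ e y q →
    blkLen μ θ e y (blkPos μ θ e y q i) = blkLen μ θ e y (blkPos μ θ e y q j) →
    (∀ t < blkLen μ θ e y (blkPos μ θ e y q i),
      y (blkPos μ θ e y q i + t) = y (blkPos μ θ e y q j + t)) →
    i = j

end MeasureDefs

/-- The block length `⌊N^α⌋`. -/
def blockB (N : ℕ) (α : ℝ) : ℕ := ⌊(N : ℝ) ^ α⌋₊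

/-- The number `M_N` of blocks. -/
def blockM (N : ℕ) (α : ℝ) : ℕ := (N + blockB N α - 1) / blockB N α

/-- The starting position of the `s`-th (0-based) block. -/
def blockStart (N : ℕ) (α : ℝ) (s : ℕ) : ℕ := s * blockB N α

/-- The end position of the `s`-th (0-based) block. -/
def blockEnd (N : ℕ) (α : ℝ) (s : ℕ) : ℕ := min ((s + 1) * blockB N α) N

/-- `S_b(y_1^N)`: the set of bad blocks of the block auxiliary parsing (with threshold
`N^{-1-ε}`, word probabilities computed with `μ`). -/
def badSet {A : Type*} [MeasurableSpace A] (μ : Measure (ℕ → A)) (N : ℕ) (α ε : ℝ)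
    (y : ℕ → A) : Set ℕ :=
  {s | s < blockM N α ∧
    ¬ GoodBlock μ ((N : ℝ) ^ (-1 - ε)) (blockEnd N α s) y (blockStart N α s)}

/-- `ℓ₋ = ln N / (-2 γ₋)`. -/
def ellMinus (N : ℕ) (γm : ℝ) : ℝ := Real.log N / (-2 * γm)

/-- `ℓ₊ = 2 ln N / (-γ₊)`. -/
def ellPlus (N : ℕ) (γp : ℝ) : ℝ := 2 * Real.log N / (-γp)

/-- `d₊ = 2 N^α / ℓ₋`. -/
def dPlus (N : ℕ) (α γm : ℝ) : ℝ := 2 * (N : ℝ) ^ α / ellMinus N γm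

section CrossEntropy

variable {A : Type*} [MeasurableSpace A] [Fintype A]

/-- The `n`-th cross-entropy average `-(1/n) ∑_{a ∈ 𝒜ⁿ} ℚ[a] ln ℙ[a]`, real-valued version. -/
def hcSeq (μP μQ : Measure (ℕ → A)) (n : ℕ) : ℝ :=
  -(1 / (n : ℝ)) * ∑ a : Fin n → A, wp μQ a * Real.log (wp μP a)

/-- `-ln p` as an element of `[0, ∞]`, for `p ∈ [0, 1]`; equals `⊤` when `p = 0`. -/
def negLog (p : ℝ≥0∞) : ℝ≥0∞ := if p = 0 then ⊤ else ENNReal.ofReal (-Real.log p.toReal)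

/-- The `n`-th cross-entropy average, `[0, ∞]`-valued version. -/
def hcSeqE (μP μQ : Measure (ℕ → A)) (n : ℕ) : ℝ≥0∞ :=
  (∑ a : Fin n → A, μQ (cyl a) * negLog (μP (cyl a))) / (n : ℝ≥0∞)

end CrossEntropy

end ZM

namespace ZM

set_option linter.unusedSectionVars false

section Aux

variable {A : Type*} [Fintype A] [MeasurableSpace A]

lemma shift_iterate_apply (x : ℕ → A) (p i : ℕ) : (shift^[p]) x i = x (i + p) := by
  induction p generalizing x with
  | zero => rfl
  | succ p ih =>
    rw [Function.iterate_succ_apply, ih]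
    simp only [shift]
    ring_nf

/-- The measurable atom of a point of `A`. -/
def atomA (b : A) : Set A := ⋂₀ {S : Set A | MeasurableSet S ∧ b ∈ S}

lemma mem_atomA_self (b : A) : b ∈ atomA b := fun _ hS => hS.2

lemma measurableSet_atomA (b : A) : MeasurableSet (atomA b) := by
  apply MeasurableSet.sInter
  · exact Set.Countable.mono (Set.subset_univ _) (Set.countable_univ)
  · exact fun S hS => hS.1

lemma atomA_subset {b : A} {S : Set A} (hS : MeasurableSet S) (hb : b ∈ S) : atomA b ⊆ S :=
  Set.sInter_subset_of_mem ⟨hS, hb⟩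

lemma mem_atomA_symm {b c : A} (h : c ∈ atomA b) : b ∈ atomA c := by
  intro S hS
  by_contra hbS
  exact (h (Sᶜ) ⟨hS.1.compl, hbS⟩) hS.2

lemma mem_atomA_trans {b c d : A} (hc : c ∈ atomA b) (hd : d ∈ atomA c) : d ∈ atomA b :=
  fun S hS => hd S ⟨hS.1, hc S hS⟩

lemma atomA_eq_of_mem {b c : A} (h : c ∈ atomA b) : atomA c = atomA b := by
  apply Set.Subset.antisymm
  · exact fun d hd => mem_atomA_trans h hd
  · exact fun d hd => mem_atomA_trans (mem_atomA_symm h) hd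

/-- A set of sequences is saturated if it is closed under replacing every letter by a
letter in the same measurable atom. -/
def SaturatedSet (M : Set (ℕ → A)) : Prop :=
  ∀ x ∈ M, ∀ y : ℕ → A, (∀ i, y i ∈ atomA (x i)) → y ∈ M

lemma saturatedSet_of_measurableSet {M : Set (ℕ → A)} (hM : MeasurableSet M) :
    SaturatedSet M := by
  let m : MeasurableSpace (ℕ → A) :=
    { MeasurableSet' := SaturatedSet
      measurableSet_empty := fun x hx => absurd hx (Set.notMem_empty x)
      measurableSet_compl := by
        intro M hM x hx y hxy hyM
        exact hx (hM y hyM x fun i => mem_atomA_symm (hxy i))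
      measurableSet_iUnion := by
        intro f hf x hx y hxy
        obtain ⟨S, ⟨n, rfl⟩, hxS⟩ := hx
        exact Set.mem_iUnion.2 ⟨n, hf n x hxS y hxy⟩ }
  have hle : (MeasurableSpace.pi : MeasurableSpace (ℕ → A)) ≤ m := by
    refine iSup_le fun i => ?_
    intro S hS
    obtain ⟨T, hT, rfl⟩ := hS
    intro x hx y hxy
    exact atomA_subset hT hx (hxy i)
  exact hle M hM

/-- The type of measurable atoms of `A`. -/
def PatA (A : Type*) [MeasurableSpace A] : Type _ := {S : Set A // ∃ b : A, S = atomA b}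

noncomputable instance : Fintype (PatA A) := by
  classical
  have : Finite (PatA A) := by
    have : Finite (Set A) := inferInstance
    exact Subtype.finite
  exact Fintype.ofFinite _

/-- The cylinder-like set defined by a word of atoms. -/
def PB {t : ℕ} (γ : Fin t → PatA A) : Set (ℕ → A) := {x | ∀ i : Fin t, x i ∈ (γ i).1}

/-- The atom word of a word. -/
def atomize {n : ℕ} (w : Fin n → A) : Fin n → PatA A := fun i => ⟨atomA (w i), w i, rfl⟩

lemma measurableSet_PB {t : ℕ} (γ : Fin t → PatA A) : MeasurableSet (PB γ) := by
  have : PB γ = ⋂ i : Fin t, (fun x : ℕ → A => x (i : ℕ)) ⁻¹' (γ i).1 := by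
    ext x; simp [PB]
  rw [this]
  refine MeasurableSet.iInter fun i => ?_
  obtain ⟨b, hb⟩ := (γ i).2
  exact (measurable_pi_apply _) (hb ▸ measurableSet_atomA b)

lemma cyl_subset_PB {n : ℕ} (w : Fin n → A) : cyl w ⊆ PB (atomize w) := by
  intro x hx i
  simpa [atomize, hx i] using mem_atomA_self (w i)

lemma PB_disjoint {t : ℕ} {γ γ' : Fin t → PatA A} (h : γ ≠ γ') :
    Disjoint (PB γ) (PB γ') := by
  rw [Set.disjoint_left]
  intro x hx hx'
  apply h
  funext i
  apply Subtype.ext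
  obtain ⟨b, hb⟩ := (γ i).2
  obtain ⟨b', hb'⟩ := (γ' i).2
  have h1 : atomA (x (i : ℕ)) = (γ i).1 := by rw [hb]; exact atomA_eq_of_mem (hb ▸ hx i)
  have h2 : atomA (x (i : ℕ)) = (γ' i).1 := by rw [hb']; exact atomA_eq_of_mem (hb' ▸ hx' i)
  rw [← h1, ← h2]

lemma iUnion_PB (t : ℕ) : (⋃ γ : Fin t → PatA A, PB γ) = Set.univ := by
  refine Set.eq_univ_of_forall fun x => ?_
  exact Set.mem_iUnion.2 ⟨fun i => ⟨atomA (x (i : ℕ)), x (i : ℕ), rfl⟩,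
    fun i => mem_atomA_self _⟩

lemma PB_append {a b : ℕ} (δ : Fin a → PatA A) (γ : Fin b → PatA A) :
    PB (Fin.append δ γ) = PB δ ∩ (shift^[a]) ⁻¹' (PB γ) := by
  ext x
  constructor
  · intro h
    refine ⟨fun i => ?_, fun j => ?_⟩
    · have := h (Fin.castAdd b i)
      simpa [Fin.append_left] using this
    · have := h (Fin.natAdd a j)
      rw [shift_iterate_apply]
      simpa [Fin.append_right, add_comm] using this
  · rintro ⟨h1, h2⟩ i
    refine Fin.addCases (motive := fun i => x (i : ℕ) ∈ ((Fin.append δ γ) i).1)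
      (fun i => ?_) (fun j => ?_) i
    · simpa [Fin.append_left] using h1 i
    · have := h2 j
      rw [shift_iterate_apply] at this
      simpa [Fin.append_right, add_comm] using this

lemma atomize_append {a b : ℕ} (u : Fin a → A) (v : Fin b → A) :
    atomize (Fin.append u v) = Fin.append (atomize u) (atomize v) := by
  funext i
  refine Fin.addCases (motive := fun i =>
    atomize (Fin.append u v) i = Fin.append (atomize u) (atomize v) i)
    (fun i => ?_) (fun j => ?_) i
  · apply Subtype.ext; simp [atomize, Fin.append_left]
  · apply Subtype.ext; simp [atomize, Fin.append_right]

end Aux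

section AuxMeasure

variable {A : Type*} [Fintype A] [MeasurableSpace A]
variable {μ : Measure (ℕ → A)} [IsProbabilityMeasure μ]

lemma measure_preimage_iterate_le (hstat : MeasurePreserving shift μ μ) (p : ℕ)
    (S : Set (ℕ → A)) : μ ((shift^[p]) ⁻¹' S) ≤ μ S := by
  calc μ ((shift^[p]) ⁻¹' S) ≤ μ ((shift^[p]) ⁻¹' (toMeasurable μ S)) :=
        measure_mono (Set.preimage_mono (subset_toMeasurable μ S))
    _ = μ (toMeasurable μ S) :=
        (hstat.iterate p).measure_preimage
          (measurableSet_toMeasurable μ S).nullMeasurableSet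
    _ = μ S := measure_toMeasurable S

lemma measure_PB_atomize {n : ℕ} (w : Fin n → A) : μ (PB (atomize w)) = μ (cyl w) := by
  refine le_antisymm ?_ (measure_mono (cyl_subset_PB w))
  have hsub : PB (atomize w) ⊆ toMeasurable μ (cyl w) := by
    intro x hx
    classical
    set z : ℕ → A := fun i => if h : i < n then w ⟨i, h⟩ else x i with hz
    have hzcyl : z ∈ cyl w := by
      intro i
      simp only [hz]
      rw [dif_pos i.isLt]
    have hzM : z ∈ toMeasurable μ (cyl w) := subset_toMeasurable μ (cyl w) hzcyl
    refine saturatedSet_of_measurableSet (measurableSet_toMeasurable μ (cyl w)) z hzM x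
      fun i => ?_
    by_cases h : i < n
    · have : z i = w ⟨i, h⟩ := by simp only [hz]; rw [dif_pos h]
      rw [this]
      exact hx ⟨i, h⟩
    · have : z i = x i := by simp only [hz]; rw [dif_neg h]
      rw [this]
      exact mem_atomA_self _
  calc μ (PB (atomize w)) ≤ μ (toMeasurable μ (cyl w)) := measure_mono hsub
    _ = μ (cyl w) := measure_toMeasurable _

lemma measure_cyl_ne_top {n : ℕ} (w : Fin n → A) : μ (cyl w) ≠ ⊤ := measure_ne_top μ _

/-- Decoupling for atom-cylinders, from condition (ID). -/
lemma PB_pair_bound (hstat : MeasurePreserving shift μ μ) {k : ℕ → ℝ}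
    (hID : CondID μ k) {n t : ℕ} (δ : Fin n → PatA A) (γ : Fin t → PatA A) :
    μ (PB (Fin.append δ γ)) ≤
      ENNReal.ofReal (Real.exp (k n)) * (μ (PB δ) * μ (PB γ)) := by
  classical
  -- choose representatives
  have hd : ∀ i, ∃ b : A, (δ i).1 = atomA b := fun i => (δ i).2
  have hc : ∀ i, ∃ b : A, (γ i).1 = atomA b := fun i => (γ i).2
  choose d hd using hd
  choose c hc using hc
  have hδ : δ = atomize d := by
    funext i; exact Subtype.ext (hd i)
  have hγ : γ = atomize c := by
    funext i; exact Subtype.ext (hc i)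
  subst hδ hγ
  rw [← atomize_append, measure_PB_atomize, measure_PB_atomize, measure_PB_atomize]
  by_cases hd0 : μ (cyl d) = 0
  · have : μ (cyl (Fin.append d c)) = 0 := by
      have h1 : cyl (Fin.append d c) ⊆ PB (atomize d) := by
        have h2 := cyl_subset_PB (Fin.append d c)
        rw [atomize_append, PB_append] at h2
        exact h2.trans Set.inter_subset_left
      exact le_antisymm (le_trans (measure_mono h1) (by rw [measure_PB_atomize, hd0]))
        zero_le
    simp [this]
  by_cases hc0 : μ (cyl c) = 0
  · have : μ (cyl (Fin.append d c)) = 0 := by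
      have h1 : cyl (Fin.append d c) ⊆ (shift^[n]) ⁻¹' (PB (atomize c)) := by
        have h2 := cyl_subset_PB (Fin.append d c)
        rw [atomize_append, PB_append] at h2
        exact h2.trans Set.inter_subset_right
      refine le_antisymm (le_trans (measure_mono h1) ?_) zero_le
      calc μ ((shift^[n]) ⁻¹' (PB (atomize c))) ≤ μ (PB (atomize c)) :=
            measure_preimage_iterate_le hstat n _
        _ = 0 := by rw [measure_PB_atomize, hc0]
    simp [this]
  · have hdpos : 0 < μ (cyl d) := lt_of_le_of_ne zero_le (Ne.symm hd0)
    have hcpos : 0 < μ (cyl c) := lt_of_le_of_ne zero_le (Ne.symm hc0)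
    have hID' := (hID.2.2 n t d c hdpos hcpos).1
    have hwp : ∀ {q : ℕ} (a : Fin q → A), μ (cyl a) = ENNReal.ofReal (wp μ a) := by
      intro q a
      rw [wp, ENNReal.ofReal_toReal (measure_cyl_ne_top a)]
    rw [hwp (Fin.append d c), hwp d, hwp c,
      ← ENNReal.ofReal_mul (show (0:ℝ) ≤ wp μ d from ENNReal.toReal_nonneg),
      ← ENNReal.ofReal_mul (Real.exp_pos _).le]
    exact ENNReal.ofReal_le_ofReal hID'

/-- Decomposition of an atom-determined set as a finite union of atom-cylinders. -/
lemma F_eq_union {Q : ℕ} {F : Set (ℕ → A)}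
    (h : ∀ x ∈ F, ∀ z : ℕ → A, (∀ i : ℕ, i < Q → z i ∈ atomA (x i)) → z ∈ F) :
    F = ⋃ ρ ∈ {ρ : Fin Q → PatA A | PB ρ ⊆ F}, PB ρ := by
  ext x
  constructor
  · intro hx
    have hmem : (atomize fun i : Fin Q => x (i : ℕ)) ∈ {ρ : Fin Q → PatA A | PB ρ ⊆ F} := by
      intro z hz
      refine h x hx z fun i hi => ?_
      exact hz ⟨i, hi⟩
    exact Set.mem_biUnion hmem (cyl_subset_PB _ (fun i => rfl))
  · rintro ⟨S, ⟨ρ, rfl⟩, hS⟩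
    simp only [Set.mem_iUnion] at hS
    obtain ⟨hρ, hxρ⟩ := hS
    exact hρ hxρ

/-- The key decoupling step: a word decouples from a shifted atom-determined set. -/
lemma key_step (hstat : MeasurePreserving shift μ μ) {k : ℕ → ℝ}
    (hID : CondID μ k) {n : ℕ} (w : Fin n → A) (Q : ℕ) (F : Set (ℕ → A))
    (hdet : ∀ x ∈ F, ∀ z : ℕ → A, (∀ i : ℕ, i < Q → z i ∈ atomA (x i)) → z ∈ F) :
    μ (PB (atomize w) ∩ (shift^[n]) ⁻¹' F) ≤
      ENNReal.ofReal (Real.exp (k n)) * (μ (cyl w) * μ F) := by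
  classical
  set Φ : Finset (Fin Q → PatA A) := Finset.univ.filter (fun ρ => PB ρ ⊆ F) with hΦ
  have hF : F = ⋃ ρ ∈ Φ, PB ρ := by
    rw [F_eq_union hdet]
    ext x
    simp [hΦ]
  have hdecomp : PB (atomize w) ∩ (shift^[n]) ⁻¹' F =
      ⋃ ρ ∈ Φ, PB (Fin.append (atomize w) ρ) := by
    conv_lhs => rw [hF]
    rw [Set.preimage_iUnion₂, Set.inter_iUnion₂]
    refine Set.iUnion₂_congr fun ρ hρ => ?_
    rw [PB_append]
  rw [hdecomp]
  calc μ (⋃ ρ ∈ Φ, PB (Fin.append (atomize w) ρ))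
      ≤ ∑ ρ ∈ Φ, μ (PB (Fin.append (atomize w) ρ)) := measure_biUnion_finset_le Φ _
    _ ≤ ∑ ρ ∈ Φ, ENNReal.ofReal (Real.exp (k n)) * (μ (PB (atomize w)) * μ (PB ρ)) :=
        Finset.sum_le_sum fun ρ _ => PB_pair_bound hstat hID (atomize w) ρ
    _ = ENNReal.ofReal (Real.exp (k n)) * (μ (PB (atomize w)) * ∑ ρ ∈ Φ, μ (PB ρ)) := by
        rw [← Finset.mul_sum, ← Finset.mul_sum]
    _ = ENNReal.ofReal (Real.exp (k n)) * (μ (cyl w) * μ F) := by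
        rw [measure_PB_atomize]
        congr 2
        rw [hF, measure_biUnion_finset ?_ (fun ρ _ => measurableSet_PB ρ)]
        intro ρ _ ρ' _ hne
        exact PB_disjoint hne

/-- The core decoupling bound: the probability that given words occur at given
`ℓ`-separated positions is at most the product of the decoupled probabilities. -/
lemma core_bound (hstat : MeasurePreserving shift μ μ) {k : ℕ → ℝ}
    (hID : CondID μ k) {ℓ : ℕ} (hℓ : 1 ≤ ℓ) :
    ∀ (n : ℕ) (T : Finset ((Fin ℓ → A) × ℕ)), T.card = n →
    (∀ a ∈ T, ∀ b ∈ T, a ≠ b → a.2 + ℓ ≤ b.2 ∨ b.2 + ℓ ≤ a.2) →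
    μ (⋂ a ∈ T, (shift^[a.2]) ⁻¹' (PB (atomize a.1))) ≤
      ∏ a ∈ T, (ENNReal.ofReal (Real.exp (k ℓ)) * μ (cyl a.1)) := by
  intro n
  induction n using Nat.strong_induction_on with
  | _ n IH =>
    intro T hcard hsep
    rcases T.eq_empty_or_nonempty with rfl | hne
    · simp
    obtain ⟨a₀, ha₀, hmin⟩ := T.exists_min_image Prod.snd hne
    set p₀ := a₀.2 with hp₀
    set T' := T.erase a₀ with hT'
    have hgap : ∀ b ∈ T', p₀ + ℓ ≤ b.2 := by
      intro b hb
      have hbT : b ∈ T := Finset.mem_of_mem_erase hb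
      have hbne : b ≠ a₀ := Finset.ne_of_mem_erase hb
      rcases hsep a₀ ha₀ b hbT (Ne.symm hbne) with h | h
      · exact h
      · have := hmin b hbT
        omega
    set F : Set (ℕ → A) :=
      ⋂ b ∈ T', (shift^[b.2 - p₀ - ℓ]) ⁻¹' (PB (atomize b.1)) with hF
    have hiter : ∀ (b2 : ℕ), p₀ + ℓ ≤ b2 → ∀ x : ℕ → A,
        shift^[b2 - p₀ - ℓ] (shift^[ℓ] (shift^[p₀] x)) = shift^[b2] x := by
      intro b2 hb2 x
      rw [← Function.iterate_add_apply, ← Function.iterate_add_apply]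
      congr 1
      omega
    have hsplit : (⋂ a ∈ T, (shift^[a.2]) ⁻¹' (PB (atomize a.1))) ⊆
        (shift^[p₀]) ⁻¹' (PB (atomize a₀.1) ∩ (shift^[ℓ]) ⁻¹' F) := by
      intro x hx
      simp only [Set.mem_iInter, Set.mem_preimage] at hx
      refine ⟨hx a₀ ha₀, ?_⟩
      simp only [hF, Set.mem_preimage, Set.mem_iInter]
      intro b hb
      rw [hiter b.2 (hgap b hb) x]
      exact hx b (Finset.mem_of_mem_erase hb)
    set Q : ℕ := (T'.sup Prod.snd) + ℓ with hQ
    have hdet : ∀ x ∈ F, ∀ z : ℕ → A, (∀ i : ℕ, i < Q → z i ∈ atomA (x i)) → z ∈ F := by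
      intro x hxF z hz
      simp only [hF, Set.mem_iInter, Set.mem_preimage] at hxF ⊢
      intro b hb i
      have hx := hxF b hb i
      simp only [PB, Set.mem_setOf_eq, shift_iterate_apply] at hx ⊢
      have hiQ : (i : ℕ) + (b.2 - p₀ - ℓ) < Q := by
        have h1 : b.2 ≤ T'.sup Prod.snd := Finset.le_sup (f := Prod.snd) hb
        have h2 : (i : ℕ) < ℓ := i.isLt
        omega
      obtain ⟨c, hc⟩ := (atomize b.1 i).2
      rw [hc] at hx ⊢
      exact mem_atomA_trans hx (hz _ hiQ)
    have hkey := key_step hstat hID a₀.1 Q F hdet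
    -- the shifted tail
    set φ : (Fin ℓ → A) × ℕ → (Fin ℓ → A) × ℕ := fun b => (b.1, b.2 - p₀ - ℓ) with hφ
    have hsndinj : ∀ a ∈ T, ∀ b ∈ T, a.2 = b.2 → a = b := by
      intro a ha b hb hab
      by_contra hne'
      rcases hsep a ha b hb hne' with h | h <;> omega
    have hinj : Set.InjOn φ T' := by
      intro a ha b hb hphi
      have h2 : a.2 - (p₀ + ℓ) = b.2 - (p₀ + ℓ) := by
        have := congrArg (fun p : (Fin ℓ → A) × ℕ => p.2) hphi
        simp only [hφ] at this
        omega
      have ha2 := hgap a ha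
      have hb2 := hgap b hb
      have h3 : a.2 = b.2 := by omega
      exact hsndinj a (Finset.mem_of_mem_erase ha) b (Finset.mem_of_mem_erase hb) h3
    set T'' := T'.image φ with hT''
    have hFeq : F = ⋂ a ∈ T'', (shift^[a.2]) ⁻¹' (PB (atomize a.1)) := by
      simp only [hF, hT'']
      ext x
      simp only [Set.mem_iInter, Finset.mem_image]
      constructor
      · rintro h a ⟨b, hb, rfl⟩
        exact h b hb
      · intro h b hb
        exact h (φ b) ⟨b, hb, rfl⟩
    have hsep'' : ∀ a ∈ T'', ∀ b ∈ T'', a ≠ b → a.2 + ℓ ≤ b.2 ∨ b.2 + ℓ ≤ a.2 := by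
      intro a ha b hb hab
      obtain ⟨a', ha', rfl⟩ := Finset.mem_image.1 ha
      obtain ⟨b', hb', rfl⟩ := Finset.mem_image.1 hb
      have hne' : a' ≠ b' := fun h => hab (by rw [h])
      have h1 := hgap a' ha'
      have h2 := hgap b' hb'
      rcases hsep a' (Finset.mem_of_mem_erase ha') b' (Finset.mem_of_mem_erase hb') hne'
        with h | h
      · left; simp only [hφ]; omega
      · right; simp only [hφ]; omega
    have hcard'' : T''.card < n := by
      have h1 : T''.card ≤ T'.card := Finset.card_image_le
      have h2 : T'.card < T.card := Finset.card_erase_lt_of_mem ha₀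
      omega
    have hIH := IH T''.card hcard'' T'' rfl hsep''
    rw [← hFeq] at hIH
    have hprod : ∏ a ∈ T'', (ENNReal.ofReal (Real.exp (k ℓ)) * μ (cyl a.1)) =
        ∏ b ∈ T', (ENNReal.ofReal (Real.exp (k ℓ)) * μ (cyl b.1)) := by
      rw [hT'', Finset.prod_image (fun a ha b hb h => hinj ha hb h)]
    calc μ (⋂ a ∈ T, (shift^[a.2]) ⁻¹' (PB (atomize a.1)))
        ≤ μ ((shift^[p₀]) ⁻¹' (PB (atomize a₀.1) ∩ (shift^[ℓ]) ⁻¹' F)) :=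
          measure_mono hsplit
      _ ≤ μ (PB (atomize a₀.1) ∩ (shift^[ℓ]) ⁻¹' F) :=
          measure_preimage_iterate_le hstat p₀ _
      _ ≤ ENNReal.ofReal (Real.exp (k ℓ)) * (μ (cyl a₀.1) * μ F) := hkey
      _ ≤ ENNReal.ofReal (Real.exp (k ℓ)) * (μ (cyl a₀.1) *
            ∏ a ∈ T'', (ENNReal.ofReal (Real.exp (k ℓ)) * μ (cyl a.1))) :=
          mul_le_mul_right (mul_le_mul_right hIH _) _
      _ = ∏ a ∈ T, (ENNReal.ofReal (Real.exp (k ℓ)) * μ (cyl a.1)) := by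
          rw [hprod, ← mul_assoc, ← Finset.mul_prod_erase T _ ha₀]

lemma cyl_seg_anti (y : ℕ → A) {p ℓ n' : ℕ} (h : ℓ ≤ n') :
    cyl (seg y p n') ⊆ cyl (seg y p ℓ) := by
  intro x hx i
  have := hx ⟨(i : ℕ), lt_of_lt_of_le i.isLt h⟩
  simpa [seg] using this

lemma seg_pos (hstat : MeasurePreserving shift μ μ) {y : ℕ → A} (hy : y ∈ suppSet μ)
    (p n : ℕ) : 0 < μ (cyl (seg y p n)) := by
  have hsub : cyl (seg y 0 (p + n)) ⊆ (shift^[p]) ⁻¹' cyl (seg y p n) := by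
    intro x hx i
    show (shift^[p]) x (i : ℕ) = y (p + (i : ℕ))
    rw [shift_iterate_apply]
    have := hx ⟨(i : ℕ) + p, by omega⟩
    simp only [seg, zero_add] at this
    rw [this, add_comm]
  calc (0 : ℝ≥0∞) < μ (cyl (seg y 0 (p + n))) := hy (p + n)
    _ ≤ μ ((shift^[p]) ⁻¹' cyl (seg y p n)) := measure_mono hsub
    _ ≤ μ (cyl (seg y p n)) := measure_preimage_iterate_le hstat p _

lemma blkLen_spec {θ : ℝ} {e : ℕ} {y : ℕ → A} {q j : ℕ}
    (hj : j < dCount μ θ e y q) :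
    1 ≤ blkLen μ θ e y (blkPos μ θ e y q j) ∧
    blkPos μ θ e y q j + blkLen μ θ e y (blkPos μ θ e y q j) ≤ e ∧
    wp μ (seg y (blkPos μ θ e y q j) (blkLen μ θ e y (blkPos μ θ e y q j))) ≤ θ := by
  have hne : blkLen μ θ e y (blkPos μ θ e y q j) ≠ 0 := by
    have h := Nat.notMem_of_lt_sInf
      (show j < sInf {i | blkLen μ θ e y (blkPos μ θ e y q i) = 0} from hj)
    simpa using h
  have hS : {ℓ' | 1 ≤ ℓ' ∧ blkPos μ θ e y q j + ℓ' ≤ e ∧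
      wp μ (seg y (blkPos μ θ e y q j) ℓ') ≤ θ}.Nonempty := by
    by_contra h
    rw [Set.not_nonempty_iff_eq_empty] at h
    exact hne (by rw [blkLen, h, Nat.sInf_empty])
  exact Nat.sInf_mem hS

lemma blkLen_min {θ : ℝ} {e : ℕ} {y : ℕ → A} {q j ℓ' : ℕ}
    (h : ℓ' < blkLen μ θ e y (blkPos μ θ e y q j)) :
    ¬(1 ≤ ℓ' ∧ blkPos μ θ e y q j + ℓ' ≤ e ∧
      wp μ (seg y (blkPos μ θ e y q j) ℓ') ≤ θ) :=
  Nat.notMem_of_lt_sInf h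

lemma blkPos_count (θ : ℝ) (e : ℕ) (y : ℕ → A) (q ℓ : ℕ) : ∀ j : ℕ,
    q + ℓ * ((Finset.range j).filter
      (fun i => blkLen μ θ e y (blkPos μ θ e y q i) = ℓ)).card ≤ blkPos μ θ e y q j := by
  intro j
  induction j with
  | zero => simp [blkPos]
  | succ j ih =>
    have hstep : blkPos μ θ e y q (j + 1) =
        blkPos μ θ e y q j + blkLen μ θ e y (blkPos μ θ e y q j) := rfl
    rw [Finset.range_add_one, Finset.filter_insert]
    by_cases h : blkLen μ θ e y (blkPos μ θ e y q j) = ℓ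
    · rw [if_pos h, Finset.card_insert_of_notMem (by simp)]
      rw [hstep, h]
      have := ih
      ring_nf
      ring_nf at this
      omega
    · rw [if_neg h, hstep]
      omega

end AuxMeasure

set_option maxHeartbeats 2000000 in
/-- **Lemma 3.8.** In a good block, the probability that exactly `m` of its words match
`x_1^N` at positions `≡ K (mod ℓ)` is at most `binom(d₊, m) e^{m k_{ℓ₊}} N^{-mε}`. -/
theorem m_words_match_prob {A : Type*} [Fintype A] [MeasurableSpace A]
    (μP : Measure (ℕ → A)) [IsProbabilityMeasure μP]
    (hPstat : MeasurePreserving shift μP μP)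
    (kP : ℕ → ℝ) (γp γm : ℝ)
    (hPID : CondID μP kP) (hPFE : CondFE μP γp) (hPSE : CondSE μP γm)
    (ε α : ℝ) (hε : 0 < ε ∧ ε < 1 / 2) (hα : 0 < α ∧ α < γp / (8 * γm))
    (y : ℕ → A) (hy : y ∈ suppSet μP) :
    ∀ᶠ N : ℕ in atTop, ∀ s : ℕ,
      GoodBlock μP ((N : ℝ) ^ (-1 - ε)) (blockEnd N α s) y (blockStart N α s) →
      ∀ (ℓ K m : ℕ), 1 ≤ K → K ≤ ℓ →
        (μP {x | Set.ncard {j |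
            j < dCount μP ((N : ℝ) ^ (-1 - ε)) (blockEnd N α s) y (blockStart N α s) ∧
            blkLen μP ((N : ℝ) ^ (-1 - ε)) (blockEnd N α s) y
              (blkPos μP ((N : ℝ) ^ (-1 - ε)) (blockEnd N α s) y (blockStart N α s) j) = ℓ ∧
            ∃ r < (N - K + 1) / ℓ, ∀ i < ℓ,
              y (blkPos μP ((N : ℝ) ^ (-1 - ε)) (blockEnd N α s) y (blockStart N α s) j + i) =
                x (K - 1 + r * ℓ + i)} = m}).toReal ≤
          ((⌈dPlus N α γm⌉₊).choose m : ℝ) * Real.exp (m * kP ⌈ellPlus N γp⌉₊) *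
            (N : ℝ) ^ (-(m * ε)) := by
  classical
  obtain ⟨hε0, hεhalf⟩ := hε
  obtain ⟨hγp0, hFE'⟩ := hPFE
  obtain ⟨hγm0, hSE'⟩ := hPSE
  obtain ⟨nFE, hFE⟩ := Filter.eventually_atTop.1 hFE'
  obtain ⟨nSE, hSE⟩ := Filter.eventually_atTop.1 hSE'
  have hkmono := hPID.1
  have hlog : ∀ C : ℝ, ∀ᶠ N : ℕ in atTop, C ≤ Real.log N := fun C =>
    (Real.tendsto_log_atTop.comp tendsto_natCast_atTop_atTop).eventually_ge_atTop C
  filter_upwards [hlog (((nSE : ℝ) + 1) * (-γm)), hlog (2 * (-γp)),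
    hlog (((nFE : ℝ) + 1) * (-γp) / 2), Filter.eventually_ge_atTop 2] with N hc1 hc2 hc3 hN2
  intro s hGood ℓ K m hK1 hKℓ
  set θ : ℝ := (N : ℝ) ^ (-1 - ε) with hθdef
  set e : ℕ := blockEnd N α s with hedef
  set q : ℕ := blockStart N α s with hqdef
  set d : ℕ := dCount μP θ e y q with hddef
  set R : ℕ := (N - K + 1) / ℓ with hRdef
  set L : ℕ := ⌈ellPlus N γp⌉₊ with hLdef
  set D : ℕ := ⌈dPlus N α γm⌉₊ with hDdef
  have hN0 : (0:ℝ) < N := by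
    have : (2:ℝ) ≤ (N:ℝ) := by exact_mod_cast hN2
    linarith
  have hlogN : 0 < Real.log N := Real.log_pos (by
    have : (2:ℝ) ≤ (N:ℝ) := by exact_mod_cast hN2
    linarith)
  have hγm' : (0:ℝ) < -γm := by linarith
  have hγp' : (0:ℝ) < -γp := by linarith
  have hθpos : 0 < θ := Real.rpow_pos_of_pos hN0 _
  have hθeq : θ = Real.exp (Real.log N * (-1 - ε)) := by
    rw [hθdef, Real.rpow_def_of_pos hN0]
  have hℓ1 : 1 ≤ ℓ := hK1.trans hKℓ
  have hRHS0 : (0:ℝ) ≤ (D.choose m : ℝ) * Real.exp (m * kP L) * (N:ℝ) ^ (-(m * ε)) := by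
    positivity
  rcases Nat.eq_zero_or_pos m with rfl | hm1
  · -- m = 0 : trivial bound by 1
    have h1 : (μP {x : ℕ → A | Set.ncard {j | j < d ∧
        blkLen μP θ e y (blkPos μP θ e y q j) = ℓ ∧ ∃ r < R, ∀ i < ℓ,
          y (blkPos μP θ e y q j + i) = x (K - 1 + r * ℓ + i)} = 0}).toReal ≤ 1 := by
      rw [← ENNReal.toReal_one]
      exact ENNReal.toReal_mono ENNReal.one_ne_top prob_le_one
    simpa using h1
  -- m ≥ 1
  set Jf : Finset ℕ :=
    (Finset.range d).filter (fun j => blkLen μP θ e y (blkPos μP θ e y q j) = ℓ) with hJfdef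
  rcases Finset.eq_empty_or_nonempty Jf with hJfe | ⟨j₀, hj₀⟩
  · -- no candidate words : event is empty
    have hE0 : μP {x : ℕ → A | Set.ncard {j | j < d ∧
        blkLen μP θ e y (blkPos μP θ e y q j) = ℓ ∧ ∃ r < R, ∀ i < ℓ,
          y (blkPos μP θ e y q j + i) = x (K - 1 + r * ℓ + i)} = m} = 0 := by
      have : {x : ℕ → A | Set.ncard {j | j < d ∧
          blkLen μP θ e y (blkPos μP θ e y q j) = ℓ ∧ ∃ r < R, ∀ i < ℓ,
            y (blkPos μP θ e y q j + i) = x (K - 1 + r * ℓ + i)} = m} = ∅ := by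
        rw [Set.eq_empty_iff_forall_notMem]
        intro x hx
        simp only [Set.mem_setOf_eq] at hx
        have hne : {j | j < d ∧
            blkLen μP θ e y (blkPos μP θ e y q j) = ℓ ∧ ∃ r < R, ∀ i < ℓ,
              y (blkPos μP θ e y q j + i) = x (K - 1 + r * ℓ + i)}.Nonempty := by
          apply Set.nonempty_of_ncard_ne_zero
          omega
        obtain ⟨j, hj⟩ := hne
        have : j ∈ Jf := Finset.mem_filter.2 ⟨Finset.mem_range.2 hj.1, hj.2.1⟩
        rw [hJfe] at this
        exact absurd this (Finset.notMem_empty j)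
      rw [this, measure_empty]
    rw [hE0]
    simpa using hRHS0
  -- main case: Jf nonempty
  have hj₀f := Finset.mem_filter.1 hj₀
  have hj₀d : j₀ < d := Finset.mem_range.1 hj₀f.1
  have hposall : ∀ p n, 0 < μP (cyl (seg y p n)) := fun p n => seg_pos hPstat hy p n
  have hJspec : ∀ j ∈ Jf, blkPos μP θ e y q j + ℓ ≤ e ∧
      wp μP (seg y (blkPos μP θ e y q j) ℓ) ≤ θ := by
    intro j hj
    have hjf := Finset.mem_filter.1 hj
    have hjd : j < dCount μP θ e y q := by
      rw [← hddef]; exact Finset.mem_range.1 hjf.1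
    have hspec := blkLen_spec (μ := μP) hjd
    rw [hjf.2] at hspec
    exact ⟨hspec.2.1, hspec.2.2⟩
  have hwle : ∀ j ∈ Jf,
      μP (cyl (seg y (blkPos μP θ e y q j) ℓ)) ≤ ENNReal.ofReal θ := by
    intro j hj
    have h1 := (hJspec j hj).2
    calc μP (cyl (seg y (blkPos μP θ e y q j) ℓ))
        = ENNReal.ofReal (wp μP (seg y (blkPos μP θ e y q j) ℓ)) :=
          (ENNReal.ofReal_toReal (measure_ne_top _ _)).symm
      _ ≤ ENNReal.ofReal θ := ENNReal.ofReal_le_ofReal h1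
  have hp0 := hJspec j₀ hj₀
  -- lower bound on ℓ
  have hℓlow : Real.log N / (-γm) ≤ (ℓ:ℝ) := by
    set n' : ℕ := max ℓ nSE with hn'
    have h1 : wp μP (seg y (blkPos μP θ e y q j₀) n') ≤ θ := by
      refine le_trans ?_ hp0.2
      exact ENNReal.toReal_mono (measure_ne_top _ _)
        (measure_mono (cyl_seg_anti y (le_max_left _ _)))
    have h2 : Real.exp (γm * n') ≤ wp μP (seg y (blkPos μP θ e y q j₀) n') :=
      hSE n' (le_max_right _ _) _ (hposall _ _)
    have h4 : γm * n' ≤ Real.log N * (-1 - ε) := by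
      have hcomb : Real.exp (γm * n') ≤ θ := h2.trans h1
      rw [hθeq] at hcomb
      exact Real.exp_le_exp.1 hcomb
    have h5 : Real.log N ≤ (-γm) * n' := by
      nlinarith [mul_nonneg hε0.le hlogN.le]
    have h6 : ((nSE:ℝ) + 1) ≤ (n':ℝ) := by
      nlinarith [hc1, hγm']
    have h6' : nSE + 1 ≤ n' := by exact_mod_cast h6
    have h7 : n' = ℓ := by
      rcases le_total ℓ nSE with h | h
      · rw [hn', max_eq_right h] at h6'; omega
      · rw [hn', max_eq_left h]
    rw [← h7, div_le_iff₀ hγm']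
    linarith [h5]
  have hℓR : (0:ℝ) < (ℓ:ℝ) := by exact_mod_cast hℓ1
  -- upper bound on ℓ
  have hℓup : ℓ ≤ L := by
    have hup : (ℓ:ℝ) ≤ ellPlus N γp := by
      rcases le_or_gt ℓ (nFE + 1) with hle | hgt
      · have h1 : ((nFE:ℝ) + 1) ≤ 2 * Real.log N / (-γp) := by
          rw [le_div_iff₀ hγp']
          linarith [hc3]
        calc (ℓ:ℝ) ≤ (nFE:ℝ) + 1 := by exact_mod_cast hle
          _ ≤ 2 * Real.log N / (-γp) := h1
          _ = ellPlus N γp := rfl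
      · have hj₀d' : j₀ < dCount μP θ e y q := by rw [← hddef]; exact hj₀d
        have hlt : ℓ - 1 < blkLen μP θ e y (blkPos μP θ e y q j₀) := by
          rw [hj₀f.2]; omega
        have hmin := blkLen_min (μ := μP) hlt
        have h2 : blkPos μP θ e y q j₀ + (ℓ - 1) ≤ e := by
          have := hp0.1; omega
        have h3 : θ < wp μP (seg y (blkPos μP θ e y q j₀) (ℓ - 1)) := by
          by_contra hcon
          push_neg at hcon
          exact hmin ⟨by omega, h2, hcon⟩
        have h4 : wp μP (seg y (blkPos μP θ e y q j₀) (ℓ - 1)) ≤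
            Real.exp (γp * ((ℓ - 1 : ℕ):ℝ)) :=
          hFE (ℓ - 1) (by omega) _ (hposall _ _)
        have h5 : Real.log N * (-1 - ε) < γp * ((ℓ:ℝ) - 1) := by
          have h6 := lt_of_lt_of_le h3 h4
          rw [hθeq] at h6
          have h7 := Real.exp_lt_exp.1 h6
          have h8 : ((ℓ - 1 : ℕ):ℝ) = (ℓ:ℝ) - 1 := by
            push_cast [Nat.cast_sub hℓ1]
            ring
          rwa [h8] at h7
        show (ℓ:ℝ) ≤ 2 * Real.log N / (-γp)
        rw [le_div_iff₀ hγp']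
        nlinarith [hεhalf, hlogN, hc2, hγp', hε0]
    have h9 : (ℓ:ℝ) ≤ (L:ℝ) := hup.trans (Nat.le_ceil _)
    exact_mod_cast h9
  -- cardinality bound on Jf
  have hJfD : Jf.card ≤ D := by
    have hd1 : 1 ≤ d := by omega
    have hd' : d - 1 < dCount μP θ e y q := by rw [← hddef]; omega
    have hposd : blkPos μP θ e y q d ≤ e := by
      have hspec := (blkLen_spec (μ := μP) hd').2.1
      have hh : blkPos μP θ e y q (d - 1 + 1) =
          blkPos μP θ e y q (d - 1) + blkLen μP θ e y (blkPos μP θ e y q (d - 1)) := rfl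
      rw [show d = d - 1 + 1 by omega, hh]
      exact hspec
    have hcnt := blkPos_count (μ := μP) θ e y q ℓ d
    have hcount : q + ℓ * Jf.card ≤ e := by
      rw [hJfdef]
      exact le_trans hcnt hposd
    have hemin : e ≤ (s + 1) * blockB N α := by
      rw [hedef]; exact min_le_left _ _
    have hqB : q = s * blockB N α := rfl
    have hsB : (s + 1) * blockB N α = s * blockB N α + blockB N α := by ring
    have hBq : ℓ * Jf.card ≤ blockB N α := by omega
    have hBle : (blockB N α : ℝ) ≤ (N:ℝ) ^ α := Nat.floor_le (by positivity)
    have hcardℝ : (Jf.card:ℝ) * (ℓ:ℝ) ≤ (N:ℝ) ^ α := by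
      calc (Jf.card:ℝ) * (ℓ:ℝ) = ((ℓ * Jf.card : ℕ):ℝ) := by push_cast; ring
        _ ≤ (blockB N α : ℝ) := by exact_mod_cast hBq
        _ ≤ (N:ℝ) ^ α := hBle
    have hellm : 0 < ellMinus N γm := by
      have : (0:ℝ) < -2 * γm := by linarith
      exact div_pos hlogN this
    have h2ellm : 2 * ellMinus N γm ≤ (ℓ:ℝ) := by
      have hγmne : γm ≠ 0 := ne_of_lt hγm0
      have heq : 2 * ellMinus N γm = Real.log N / (-γm) := by
        rw [ellMinus]
        field_simp
      rw [heq]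
      exact hℓlow
    have hcard_le : (Jf.card : ℝ) ≤ dPlus N α γm := by
      rw [dPlus, le_div_iff₀ hellm]
      nlinarith [hcardℝ, h2ellm, hellm, Nat.cast_nonneg (α := ℝ) Jf.card,
        Real.rpow_nonneg hN0.le α]
    have : (Jf.card : ℝ) ≤ (D:ℝ) := hcard_le.trans (Nat.le_ceil _)
    exact_mod_cast this
  -- the matching events
  set Match : ℕ → Set (ℕ → A) := fun j => {x | ∃ r < R, ∀ i < ℓ,
    y (blkPos μP θ e y q j + i) = x (K - 1 + r * ℓ + i)} with hMatchdef
  have hEsub : {x : ℕ → A | Set.ncard {j | j < d ∧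
      blkLen μP θ e y (blkPos μP θ e y q j) = ℓ ∧ ∃ r < R, ∀ i < ℓ,
        y (blkPos μP θ e y q j + i) = x (K - 1 + r * ℓ + i)} = m} ⊆
      ⋃ S ∈ Jf.powersetCard m, ⋂ j ∈ S, Match j := by
    intro x hx
    simp only [Set.mem_setOf_eq] at hx
    have hfin : {j | j < d ∧
        blkLen μP θ e y (blkPos μP θ e y q j) = ℓ ∧ ∃ r < R, ∀ i < ℓ,
          y (blkPos μP θ e y q j + i) = x (K - 1 + r * ℓ + i)}.Finite :=
      Set.Finite.subset (Set.finite_Iio d) (fun j hj => hj.1)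
    have hcard : hfin.toFinset.card = m := by
      rw [Set.ncard_eq_toFinset_card _ hfin] at hx
      exact hx
    have hsub : hfin.toFinset ⊆ Jf := by
      intro j hj
      have hmem := hfin.mem_toFinset.1 hj
      exact Finset.mem_filter.2 ⟨Finset.mem_range.2 hmem.1, hmem.2.1⟩
    have hS : hfin.toFinset ∈ Jf.powersetCard m := Finset.mem_powersetCard.2 ⟨hsub, hcard⟩
    refine Set.mem_biUnion hS ?_
    simp only [Set.mem_iInter]
    intro j hj
    exact (hfin.mem_toFinset.1 hj).2.2
  -- per-subset bound
  set B₀ : ℝ≥0∞ := ENNReal.ofReal (Real.exp (kP ℓ)) * ENNReal.ofReal θ with hB₀def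
  have hperS : ∀ S ∈ Jf.powersetCard m,
      μP (⋂ j ∈ S, Match j) ≤ (R:ℝ≥0∞)^m * B₀^m := by
    intro S hS
    obtain ⟨hSsub, hScard⟩ := Finset.mem_powersetCard.1 hS
    have hsub1 : (⋂ j ∈ S, Match j) ⊆ ⋃ φ : (↥S → Fin R), ⋂ j : ↥S,
        {x : ℕ → A | matchAt x (seg y (blkPos μP θ e y q (j:ℕ)) ℓ)
          (K - 1 + (φ j : ℕ) * ℓ)} := by
      intro x hx
      simp only [Set.mem_iInter] at hx
      have hx' : ∀ j : ↥S, ∃ r, r < R ∧ ∀ i < ℓ,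
          y (blkPos μP θ e y q (j:ℕ) + i) = x (K - 1 + r * ℓ + i) := by
        intro j
        obtain ⟨r, hr, hmatch⟩ := hx (j:ℕ) j.2
        exact ⟨r, hr, hmatch⟩
      choose ρ hρ1 hρ2 using hx'
      refine Set.mem_iUnion.2 ⟨fun j => ⟨ρ j, hρ1 j⟩, ?_⟩
      simp only [Set.mem_iInter]
      intro j
      intro i
      exact (hρ2 j (i:ℕ) i.isLt).symm
    refine le_trans (measure_mono hsub1) ?_
    refine le_trans (measure_iUnion_le _) ?_
    rw [tsum_fintype]
    have hφbound : ∀ φ : (↥S → Fin R),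
        μP (⋂ j : ↥S, {x : ℕ → A | matchAt x (seg y (blkPos μP θ e y q (j:ℕ)) ℓ)
          (K - 1 + (φ j : ℕ) * ℓ)}) ≤ B₀^m := by
      intro φ
      by_cases hφinj : Function.Injective φ
      · set f : ↥S → (Fin ℓ → A) × ℕ :=
          fun j => (seg y (blkPos μP θ e y q (j:ℕ)) ℓ, K - 1 + (φ j : ℕ) * ℓ) with hf
        have hfinj : Function.Injective f := by
          intro a b hab
          have h2 := congrArg (fun p : (Fin ℓ → A) × ℕ => p.2) hab
          simp only [hf] at h2
          have h3 : (φ a : ℕ) * ℓ = (φ b : ℕ) * ℓ := by omega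
          have h4 : (φ a : ℕ) = (φ b : ℕ) := Nat.eq_of_mul_eq_mul_right (by omega) h3
          exact hφinj (Fin.ext h4)
        set T : Finset ((Fin ℓ → A) × ℕ) := Finset.image f Finset.univ with hT
        have hTsep : ∀ a ∈ T, ∀ b ∈ T, a ≠ b → a.2 + ℓ ≤ b.2 ∨ b.2 + ℓ ≤ a.2 := by
          intro a ha b hb hab
          obtain ⟨ja, _, rfl⟩ := Finset.mem_image.1 ha
          obtain ⟨jb, _, rfl⟩ := Finset.mem_image.1 hb
          have hjne : (φ ja : ℕ) ≠ (φ jb : ℕ) := by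
            intro h
            exact hab (by rw [hφinj (Fin.ext h)])
          rcases hjne.lt_or_gt with h | h
          · left
            have h1 : ((φ ja : ℕ) + 1) * ℓ ≤ (φ jb : ℕ) * ℓ :=
              Nat.mul_le_mul_right _ h
            have h2 : ((φ ja : ℕ) + 1) * ℓ = (φ ja : ℕ) * ℓ + ℓ := by ring
            simp only [hf]
            omega
          · right
            have h1 : ((φ jb : ℕ) + 1) * ℓ ≤ (φ ja : ℕ) * ℓ :=
              Nat.mul_le_mul_right _ h
            have h2 : ((φ jb : ℕ) + 1) * ℓ = (φ jb : ℕ) * ℓ + ℓ := by ring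
            simp only [hf]
            omega
        have hsub2 : (⋂ j : ↥S, {x : ℕ → A | matchAt x
            (seg y (blkPos μP θ e y q (j:ℕ)) ℓ) (K - 1 + (φ j : ℕ) * ℓ)}) ⊆
            ⋂ a ∈ T, (shift^[a.2]) ⁻¹' (PB (atomize a.1)) := by
          intro x hx
          simp only [Set.mem_iInter] at hx ⊢
          intro a ha
          obtain ⟨j, _, rfl⟩ := Finset.mem_image.1 ha
          intro i
          have hm : x ((f j).2 + (i:ℕ)) = (f j).1 i := hx j i
          show (shift^[(f j).2]) x (i:ℕ) ∈ (atomize (f j).1 i).1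
          rw [shift_iterate_apply, add_comm, hm]
          exact mem_atomA_self _
        refine le_trans (measure_mono hsub2) ?_
        refine le_trans (core_bound hPstat hPID hℓ1 T.card T rfl hTsep) ?_
        rw [hT, Finset.prod_image (fun a _ b _ h => hfinj h)]
        calc ∏ j : ↥S, (ENNReal.ofReal (Real.exp (kP ℓ)) * μP (cyl (f j).1))
            ≤ ∏ _j : ↥S, B₀ := by
              refine Finset.prod_le_prod' fun j _ => ?_
              exact mul_le_mul_right (hwle (j:ℕ) (hSsub j.2)) _
          _ = B₀ ^ m := by
              rw [Finset.prod_const, Finset.card_univ, Fintype.card_coe, hScard]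
      · obtain ⟨a, b, hab, hne⟩ := Function.not_injective_iff.1 hφinj
        have hemp : (⋂ j : ↥S, {x : ℕ → A | matchAt x
            (seg y (blkPos μP θ e y q (j:ℕ)) ℓ) (K - 1 + (φ j : ℕ) * ℓ)}) = ∅ := by
          rw [Set.eq_empty_iff_forall_notMem]
          intro x hx
          simp only [Set.mem_iInter] at hx
          have hyy : ∀ t < ℓ, y (blkPos μP θ e y q (a:ℕ) + t) =
              y (blkPos μP θ e y q (b:ℕ) + t) := by
            intro t ht
            have h1 : x (K - 1 + (φ a : ℕ) * ℓ + t) =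
                y (blkPos μP θ e y q (a:ℕ) + t) := hx a ⟨t, ht⟩
            have h2 : x (K - 1 + (φ b : ℕ) * ℓ + t) =
                y (blkPos μP θ e y q (b:ℕ) + t) := hx b ⟨t, ht⟩
            rw [hab] at h1
            exact h1.symm.trans h2
          have haJ := Finset.mem_filter.1 (hSsub a.2)
          have hbJ := Finset.mem_filter.1 (hSsub b.2)
          have had : (a:ℕ) < dCount μP θ e y q := by
            rw [← hddef]; exact Finset.mem_range.1 haJ.1
          have hbd : (b:ℕ) < dCount μP θ e y q := by
            rw [← hddef]; exact Finset.mem_range.1 hbJ.1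
          have heq : (a:ℕ) = (b:ℕ) := by
            refine hGood (a:ℕ) (b:ℕ) had hbd (haJ.2.trans hbJ.2.symm) ?_
            intro t ht
            rw [haJ.2] at ht
            exact hyy t ht
          exact hne (Subtype.ext heq)
        rw [hemp]
        simp
    calc ∑ φ : (↥S → Fin R), μP (⋂ j : ↥S, {x : ℕ → A | matchAt x
          (seg y (blkPos μP θ e y q (j:ℕ)) ℓ) (K - 1 + (φ j : ℕ) * ℓ)})
        ≤ ∑ _φ : (↥S → Fin R), B₀^m := Finset.sum_le_sum (fun φ _ => hφbound φ)
      _ = (Fintype.card (↥S → Fin R)) • B₀^m := by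
          rw [Finset.sum_const, Finset.card_univ]
      _ = (R:ℝ≥0∞)^m * B₀^m := by
          rw [nsmul_eq_mul, Fintype.card_fun, Fintype.card_fin, Fintype.card_coe, hScard]
          norm_cast
  -- total bound
  have htotal : μP {x : ℕ → A | Set.ncard {j | j < d ∧
      blkLen μP θ e y (blkPos μP θ e y q j) = ℓ ∧ ∃ r < R, ∀ i < ℓ,
        y (blkPos μP θ e y q j + i) = x (K - 1 + r * ℓ + i)} = m} ≤
      (Jf.card.choose m : ℝ≥0∞) * ((R:ℝ≥0∞)^m * B₀^m) := by
    calc μP {x : ℕ → A | Set.ncard {j | j < d ∧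
        blkLen μP θ e y (blkPos μP θ e y q j) = ℓ ∧ ∃ r < R, ∀ i < ℓ,
          y (blkPos μP θ e y q j + i) = x (K - 1 + r * ℓ + i)} = m}
        ≤ μP (⋃ S ∈ Jf.powersetCard m, ⋂ j ∈ S, Match j) := measure_mono hEsub
      _ ≤ ∑ S ∈ Jf.powersetCard m, μP (⋂ j ∈ S, Match j) :=
          measure_biUnion_finset_le _ _
      _ ≤ ∑ _S ∈ Jf.powersetCard m, ((R:ℝ≥0∞)^m * B₀^m) :=
          Finset.sum_le_sum hperS
      _ = (Jf.card.choose m : ℝ≥0∞) * ((R:ℝ≥0∞)^m * B₀^m) := by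
          rw [Finset.sum_const, Finset.card_powersetCard, nsmul_eq_mul]
  -- convert to a real bound
  have hofr : (Jf.card.choose m : ℝ≥0∞) * ((R:ℝ≥0∞)^m * B₀^m) =
      ENNReal.ofReal ((Jf.card.choose m : ℝ) *
        ((R:ℝ)^m * (Real.exp (kP ℓ) * θ)^m)) := by
    have e1 : ((R:ℝ≥0∞))^m = ENNReal.ofReal ((R:ℝ)^m) := by
      rw [ENNReal.ofReal_pow (Nat.cast_nonneg R), ENNReal.ofReal_natCast]
    have e2 : B₀^m = ENNReal.ofReal ((Real.exp (kP ℓ) * θ)^m) := by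
      rw [hB₀def, ← ENNReal.ofReal_mul (Real.exp_pos _).le,
        ENNReal.ofReal_pow (by positivity)]
    rw [e1, e2, ← ENNReal.ofReal_mul (by positivity),
      show ((Jf.card.choose m : ℕ) : ℝ≥0∞) = ENNReal.ofReal ((Jf.card.choose m : ℕ):ℝ) by
        rw [ENNReal.ofReal_natCast],
      ← ENNReal.ofReal_mul (by positivity)]
  refine ENNReal.toReal_le_of_le_ofReal hRHS0 ?_
  refine le_trans htotal ?_
  rw [hofr]
  refine ENNReal.ofReal_le_ofReal ?_
  -- real arithmetic
  have hRN : (R:ℝ) ≤ (N:ℝ) := by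
    have h1 : R ≤ N := by
      have h2 := Nat.div_le_self (N - K + 1) ℓ
      omega
    exact_mod_cast h1
  have hRθ : (R:ℝ) * θ ≤ (N:ℝ) ^ (-ε) := by
    have h1 : (R:ℝ) * θ ≤ (N:ℝ) * θ :=
      mul_le_mul_of_nonneg_right hRN hθpos.le
    have h2 : (N:ℝ) * θ = (N:ℝ) ^ (-ε) := by
      rw [hθdef, show (N:ℝ) * (N:ℝ) ^ (-1 - ε) = (N:ℝ) ^ (1:ℝ) * (N:ℝ) ^ (-1 - ε) by
        rw [Real.rpow_one], ← Real.rpow_add hN0]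
      congr 1
      ring
    linarith
  have hchoose : ((Jf.card.choose m : ℕ) : ℝ) ≤ ((D.choose m : ℕ) : ℝ) := by
    exact_mod_cast Nat.choose_le_choose m hJfD
  have hexp : Real.exp (kP ℓ) ≤ Real.exp (kP L) := Real.exp_le_exp.2 (hkmono hℓup)
  calc (Jf.card.choose m : ℝ) * ((R:ℝ)^m * (Real.exp (kP ℓ) * θ)^m)
      = (Jf.card.choose m : ℝ) * (Real.exp (kP ℓ)^m * ((R:ℝ) * θ)^m) := by
        rw [mul_pow, mul_pow]
        ring
    _ ≤ (D.choose m : ℝ) * (Real.exp (kP L)^m * (((N:ℝ)^(-ε))^m)) := by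
        have hRθ0 : (0:ℝ) ≤ (R:ℝ) * θ := by positivity
        have hNε0 : (0:ℝ) ≤ (N:ℝ)^(-ε) := Real.rpow_nonneg hN0.le _
        refine mul_le_mul hchoose ?_ (by positivity) (by positivity)
        refine mul_le_mul (pow_le_pow_left₀ (Real.exp_pos _).le hexp m) ?_
          (by positivity) (by positivity)
        exact pow_le_pow_left₀ hRθ0 hRθ m
    _ = (D.choose m : ℝ) * Real.exp ((m:ℝ) * kP L) * ((N:ℝ) ^ (-((m:ℝ) * ε))) := by
        rw [Real.exp_nat_mul]
        rw [← Real.rpow_natCast ((N:ℝ)^(-ε)) m, ← Real.rpow_mul hN0.le]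
        rw [mul_assoc]
        congr 2
        ring

end ZM
end
end

section
/- Let Ω' be a topologically transitive one-sided subshift of finite type over a finite alphabet 𝒜, and suppose ℙ is a regular g-measure on Ω'. Then ℙ satisfies condition FE if and only if there exists r ∈ ℕ with the following property: for every y ∈ Ω' there exists t ∈ {1,…,r} such that T^t y has more than one preimage in Ω' under T. -/
set_option linter.unusedSectionVars false
set_option maxHeartbeats 1000000


open MeasureTheory Filter Asymptotics
open scoped ENNReal Classical

noncomputable section

namespace ZM

/-- Prepending a letter to a sequence. -/
def cons {A : Type*} (a : A) (x : ℕ → A) : ℕ → A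
  | 0 => a
  | k + 1 => x k

/-- `Ω'` is a one-sided subshift of finite type: the set of sequences avoiding a (finite)
set of forbidden words of a fixed length `m`. -/
def IsSFT {A : Type*} (Ω' : Set (ℕ → A)) : Prop :=
  ∃ (m : ℕ) (F : Set (Fin m → A)), Ω' = {x | ∀ r : ℕ, seg x r m ∉ F}

/-- `Ω'` is topologically transitive: any two words that occur in `Ω'` can be connected by
a third word. -/
def IsTopTransitive {A : Type*} (Ω' : Set (ℕ → A)) : Prop :=
  ∀ (n m : ℕ) (a : Fin n → A) (b : Fin m → A),
    (cyl a ∩ Ω').Nonempty → (cyl b ∩ Ω').Nonempty →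
    ∃ (j : ℕ) (ξ : Fin j → A), (cyl (Fin.append (Fin.append a ξ) b) ∩ Ω').Nonempty


section Helpers

variable {A : Type*} [MeasurableSpace A]

omit [MeasurableSpace A] in
lemma cyl_mono {n m : ℕ} (y : ℕ → A) (h : m ≤ n) : cyl (seg y 0 n) ⊆ cyl (seg y 0 m) := by
  intro z hz i
  exact hz ⟨i.val, lt_of_lt_of_le i.isLt h⟩

variable (μ : Measure (ℕ → A)) [IsProbabilityMeasure μ]

lemma wp_nonneg {n : ℕ} (a : Fin n → A) : 0 ≤ wp μ a := ENNReal.toReal_nonneg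

omit [IsProbabilityMeasure μ] in
lemma wp_le_one [IsProbabilityMeasure μ] {n : ℕ} (a : Fin n → A) : wp μ a ≤ 1 := by
  have := prob_le_one (μ := μ) (s := cyl a)
  simpa [wp] using ENNReal.toReal_mono (by simp) this

omit [IsProbabilityMeasure μ] in
lemma wp_pos [IsFiniteMeasure μ] {n : ℕ} {a : Fin n → A} (h : 0 < μ (cyl a)) : 0 < wp μ a :=
  ENNReal.toReal_pos h.ne' (measure_lt_top μ _).ne

omit [IsProbabilityMeasure μ] in
lemma wp_mono_prefix [IsFiniteMeasure μ] (y : ℕ → A) {m n : ℕ} (h : m ≤ n) :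
    wp μ (seg y 0 n) ≤ wp μ (seg y 0 m) :=
  ENNReal.toReal_mono (measure_lt_top μ _).ne (measure_mono (cyl_mono y h))

lemma pos_extend [Countable A] {n : ℕ} {a : Fin n → A} (h : 0 < μ (cyl a)) :
    ∃ c : A, 0 < μ (cyl (Fin.snoc a c)) := by
  by_contra hc
  push_neg at hc
  have hsub : cyl a ⊆ ⋃ c : A, cyl (Fin.snoc a c : Fin (n+1) → A) := by
    intro x hx
    refine Set.mem_iUnion.2 ⟨x n, ?_⟩
    intro i
    refine Fin.lastCases ?_ ?_ i
    · simp [Fin.snoc_last]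
    · intro j
      simp only [Fin.snoc_castSucc]
      exact hx j
  have hle := (measure_mono hsub).trans
    (measure_iUnion_le (μ := μ) (fun c : A => cyl (Fin.snoc a c : Fin (n+1) → A)))
  have hz : ∀ c : A, μ (cyl (Fin.snoc a c : Fin (n+1) → A)) = 0 :=
    fun c => le_antisymm (hc c) zero_le
  simp only [hz, tsum_zero, nonpos_iff_eq_zero] at hle
  exact h.ne' hle

/-- Recursive extension of a positive-measure word. -/
def extSeq [Nonempty A] {n : ℕ} (a : Fin n → A) : (k : ℕ) → Fin (n + k) → A
  | 0 => a
  | k + 1 =>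
    Fin.snoc (extSeq a k)
      (if h : ∃ c : A, 0 < μ (cyl (Fin.snoc (extSeq a k) c : Fin (n + k + 1) → A)) then h.choose
       else Classical.arbitrary A)

variable [Countable A] [Nonempty A]

lemma extSeq_pos {n : ℕ} {a : Fin n → A} (h : 0 < μ (cyl a)) :
    ∀ k, 0 < μ (cyl (extSeq μ a k)) := by
  intro k
  induction k with
  | zero => exact h
  | succ k ih =>
    have hex : ∃ c : A, 0 < μ (cyl (Fin.snoc (extSeq μ a k) c : Fin (n + k + 1) → A)) :=
      pos_extend μ ih
    have heq : extSeq μ a (k+1) = Fin.snoc (extSeq μ a k)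
        (if h : ∃ c : A, 0 < μ (cyl (Fin.snoc (extSeq μ a k) c : Fin (n+k+1) → A)) then h.choose
         else Classical.arbitrary A) := rfl
    rw [heq, dif_pos hex]
    exact hex.choose_spec

lemma extSeq_succ_apply {n : ℕ} (a : Fin n → A) (k : ℕ) (j : Fin (n + k)) :
    extSeq μ a (k + 1) (Fin.castSucc j) = extSeq μ a k j := by
  rw [extSeq, Fin.snoc_castSucc]

lemma extSeq_agree {n : ℕ} (a : Fin n → A) {k k' : ℕ} (h : k ≤ k') (j : ℕ)
    (hj : j < n + k) (hj' : j < n + k') :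
    extSeq μ a k' ⟨j, hj'⟩ = extSeq μ a k ⟨j, hj⟩ := by
  induction k' with
  | zero =>
    have hk : k = 0 := Nat.le_zero.mp h
    subst hk
    rfl
  | succ m ih =>
    rcases Nat.eq_or_lt_of_le h with rfl | hlt
    · rfl
    · have hm : k ≤ m := by omega
      have hjm : j < n + m := by omega
      have := extSeq_succ_apply μ a m ⟨j, hjm⟩
      have hcast : (Fin.castSucc (⟨j, hjm⟩ : Fin (n + m)) : Fin (n + m + 1)) = ⟨j, hj'⟩ := rfl
      rw [hcast] at this
      rw [this, ih hm hjm]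

/-- Every positive-measure word extends to a point of the support. -/
lemma supp_extend {n : ℕ} {a : Fin n → A} (h : 0 < μ (cyl a)) :
    ∃ y ∈ suppSet μ, ∀ i : Fin n, y i = a i := by
  set y : ℕ → A := fun i => extSeq μ a (i + 1) ⟨i, by omega⟩ with hy
  have hyk : ∀ k (j : Fin (n + k)), y j = extSeq μ a k j := by
    intro k j
    have hj1 : (j : ℕ) < n + ((j : ℕ) + 1) := by omega
    rcases le_or_gt k ((j : ℕ) + 1) with hle | hlt
    · rw [hy]
      simpa using extSeq_agree μ a hle j j.isLt hj1
    · rw [hy]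
      simp only
      rw [extSeq_agree μ a (le_of_lt hlt) (j : ℕ) hj1 j.isLt]
  refine ⟨y, ?_, ?_⟩
  · intro m
    have hpos := extSeq_pos μ h m
    refine lt_of_lt_of_le hpos (measure_mono ?_)
    intro z hz i
    have hi : (i : ℕ) < n + m := by omega
    have := hz ⟨i, hi⟩
    rw [this]
    show extSeq μ a m ⟨i, _⟩ = seg y 0 m i
    have := hyk m ⟨i, by omega⟩
    simp only [seg, Nat.zero_add]
    rw [← this]
  · intro i
    have := hyk 0 ⟨i, by omega⟩
    exact this

end Helpers

section ShiftHelpers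

variable {A : Type*}

lemma shift_iterate_apply_s18 (y : ℕ → A) (t k : ℕ) : shift^[t] y k = y (k + t) := by
  induction t generalizing y k with
  | zero => simp
  | succ t ih =>
    rw [Function.iterate_succ_apply, ih (shift y) k]
    simp [shift]
    ring_nf

lemma cons_shift (y : ℕ → A) (s : ℕ) : cons (y s) (shift^[s+1] y) = shift^[s] y := by
  funext k
  cases k with
  | zero => simp [cons, shift_iterate_apply_s18]
  | succ k =>
    simp only [cons, shift_iterate_apply_s18]
    congr 1
    omega

lemma seg_one_shift (x : ℕ → A) (n : ℕ) : seg x 1 n = seg (shift x) 0 n := by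
  funext i
  simp [seg, shift, Nat.add_comm]

lemma sft_shift_mem {Ω' : Set (ℕ → A)} (hSFT : IsSFT Ω') : ∀ x ∈ Ω', shift x ∈ Ω' := by
  obtain ⟨m, F, hF⟩ := hSFT
  intro x hx
  rw [hF] at hx ⊢
  intro r hr
  refine hx (r + 1) ?_
  have : seg (shift x) r m = seg x (r+1) m := by
    funext i
    simp only [seg, shift]
    congr 1
    omega
  rwa [this] at hr

lemma sft_iterate_mem {Ω' : Set (ℕ → A)} (hSFT : IsSFT Ω') (t : ℕ) :
    ∀ x ∈ Ω', shift^[t] x ∈ Ω' := by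
  induction t with
  | zero => intro x hx; simpa using hx
  | succ t ih =>
    intro x hx
    rw [Function.iterate_succ_apply]
    exact ih (shift x) (sft_shift_mem hSFT x hx)

end ShiftHelpers

lemma ratio_bounds {q d gx ε : ℝ} (hd : 0 < d) (h : |q / d - gx| ≤ ε) :
    q ≤ (gx + ε) * d ∧ (gx - ε) * d ≤ q := by
  rw [abs_le] at h
  constructor
  · exact (div_le_iff₀ hd).mp (by linarith [h.2])
  · exact (le_div_iff₀ hd).mp (by linarith [h.1])



lemma numeric_rho {δ : ℝ} (R : ℕ) (hR : 1 ≤ R) (hδpos : 0 < δ) (hδ1 : δ ≤ 1) :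
    (1 + δ/(4*R))^(R-1) * (1 - δ + δ/(4*R)) ≤ 1 - δ/2 := by
  have hRpos : (0:ℝ) < R := by exact_mod_cast hR
  set ε := δ/(4*(R:ℝ)) with hε
  have hεpos : 0 < ε := by positivity
  have hR1 : (1:ℝ) ≤ R := by exact_mod_cast hR
  have hεδ4 : ε ≤ δ/4 := by
    rw [hε, div_le_div_iff₀ (by positivity) (by norm_num)]
    nlinarith
  have h1 : (1+ε)^(R-1) ≤ Real.exp (δ/4) := by
    calc (1+ε)^(R-1) ≤ (Real.exp ε)^(R-1) :=
          pow_le_pow_left₀ (by linarith) (by linarith [Real.add_one_le_exp ε]) _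
      _ = Real.exp ((R-1 : ℕ) * ε) := (Real.exp_nat_mul ε (R-1)).symm
      _ ≤ Real.exp (δ/4) := by
          rw [Real.exp_le_exp]
          have hc : ((R-1 : ℕ) : ℝ) ≤ (R : ℝ) := by exact_mod_cast Nat.sub_le R 1
          have hRe : ((R : ℝ)) * ε = δ/4 := by
            rw [hε]; field_simp
          nlinarith [hεpos]
  have hE1 : Real.exp (δ/4) * (1 - δ/4) ≤ 1 := by
    have h2 := Real.add_one_le_exp (-(δ/4))
    have h3 : Real.exp (δ/4) * Real.exp (-(δ/4)) = 1 := by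
      rw [← Real.exp_add]; simp
    nlinarith [Real.exp_pos (δ/4)]
  have hEge1 : (1:ℝ) ≤ Real.exp (δ/4) := Real.one_le_exp (by positivity)
  have hP0 : (0:ℝ) ≤ (1+ε)^(R-1) := by positivity
  have hfac : 0 ≤ 1 - δ + ε := by linarith
  calc (1+ε)^(R-1) * (1 - δ + ε) ≤ Real.exp (δ/4) * (1 - δ + ε) :=
        mul_le_mul_of_nonneg_right h1 hfac
    _ ≤ Real.exp (δ/4) * (1 - 3*δ/4) := by
        apply mul_le_mul_of_nonneg_left (by linarith) (by linarith)
    _ ≤ 1 - δ/2 := by nlinarith [hE1, hEge1, sq_nonneg δ]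


/-- **Lemma 4.1.** A regular g-measure on a topologically transitive subshift of finite
type `Ω'` satisfies (FE) iff there exists `r` such that every `y ∈ Ω'` has some
`t ∈ {1, …, r}` for which `T^t y` has more than one preimage in `Ω'` under the shift. -/
theorem gmeasure_FE_iff {A : Type*} [Fintype A] [MeasurableSpace A]
    [TopologicalSpace A] [DiscreteTopology A]
    (Ω' : Set (ℕ → A)) (hSFT : IsSFT Ω') (htrans : IsTopTransitive Ω')
    (μ : Measure (ℕ → A)) [IsProbabilityMeasure μ]
    (hstat : MeasurePreserving shift μ μ)
    (hsupp : suppSet μ = Ω')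
    (g : (ℕ → A) → ℝ) (hgcont : ContinuousOn g Ω')
    (hgrange : ∀ x ∈ Ω', 0 < g x ∧ g x ≤ 1)
    (hgsum : ∀ x ∈ Ω', (∑ a : A, if cons a x ∈ Ω' then g (cons a x) else 0) = 1)
    (hgconv : ∀ δ : ℝ, 0 < δ → ∀ᶠ n : ℕ in atTop, ∀ x ∈ Ω',
      |wp μ (seg x 0 (n + 1)) / wp μ (seg x 1 n) - g x| ≤ δ) :
    (∃ γp : ℝ, CondFE μ γp) ↔
      ∃ r : ℕ, ∀ y ∈ Ω', ∃ t : ℕ, 1 ≤ t ∧ t ≤ r ∧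
        ∃ a b : A, a ≠ b ∧ cons a (shift^[t] y) ∈ Ω' ∧ cons b (shift^[t] y) ∈ Ω' := by
  -- Preliminaries
  have hNE : Nonempty (ℕ → A) := by
    rcases MeasureTheory.nonempty_of_measure_ne_zero
      (show μ Set.univ ≠ 0 by simp) with ⟨x, -⟩
    exact ⟨x⟩
  have hA : Nonempty A := ⟨hNE.some 0⟩
  -- the empty word has full measure
  have hcyl0 : (cyl (fun i : Fin 0 => i.elim0) : Set (ℕ → A)) = Set.univ := by
    ext x
    simp only [cyl, Set.mem_setOf_eq, Set.mem_univ, iff_true]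
    exact fun i => i.elim0
  have hΩne : Ω'.Nonempty := by
    obtain ⟨y, hy, -⟩ := supp_extend μ (a := fun i : Fin 0 => i.elim0)
      (by rw [hcyl0]; simp)
    exact ⟨y, hsupp ▸ hy⟩
  have hshiftmem : ∀ x ∈ Ω', shift x ∈ Ω' := sft_shift_mem hSFT
  have hitmem : ∀ (t : ℕ), ∀ x ∈ Ω', shift^[t] x ∈ Ω' := fun t => sft_iterate_mem hSFT t
  have hsuppmem : ∀ x ∈ Ω', ∀ n, 0 < μ (cyl (seg x 0 n)) := by
    intro x hx
    rw [← hsupp] at hx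
    exact hx
  -- step bounds from hgconv
  have stepb : ∀ (ε : ℝ) (n : ℕ),
      (∀ x ∈ Ω', |wp μ (seg x 0 (n + 1)) / wp μ (seg x 1 n) - g x| ≤ ε) →
      ∀ x ∈ Ω', wp μ (seg x 0 (n+1)) ≤ (g x + ε) * wp μ (seg (shift x) 0 n) ∧
        (g x - ε) * wp μ (seg (shift x) 0 n) ≤ wp μ (seg x 0 (n+1)) := by
    intro ε n hn x hx
    have hd : 0 < wp μ (seg (shift x) 0 n) :=
      wp_pos μ (hsuppmem (shift x) (hshiftmem x hx) n)
    have h := hn x hx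
    rw [seg_one_shift] at h
    exact ratio_bounds hd h
  constructor
  · -- (FE) → branching
    rintro ⟨γp, hγneg, hFE⟩
    by_contra hcon
    push_neg at hcon
    -- hcon : ∀ r, ∃ y ∈ Ω', ∀ t, 1 ≤ t → t ≤ r → ∀ a b, a ≠ b → cons a _ ∈ Ω' → cons b _ ∉ Ω'
    set ε : ℝ := 1 - Real.exp (γp / 2) with hε
    have hexp1 : Real.exp (γp / 2) < 1 := Real.exp_lt_one_iff.mpr (by linarith)
    have hεpos : 0 < ε := by simp only [hε]; linarith
    obtain ⟨n₀, hn₀⟩ := eventually_atTop.mp (hgconv ε hεpos)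
    -- minimal positive measure among words of length n₀
    set S : Finset (Fin n₀ → A) := Finset.univ.filter (fun a => 0 < μ (cyl a)) with hS
    have hSne : S.Nonempty := by
      obtain ⟨y₀, hy₀⟩ := hΩne
      exact ⟨seg y₀ 0 n₀, Finset.mem_filter.mpr ⟨Finset.mem_univ _, hsuppmem y₀ hy₀ n₀⟩⟩
    set c₀ : ℝ := S.inf' hSne (wp μ) with hc₀
    have hc₀pos : 0 < c₀ := by
      rw [hc₀, Finset.lt_inf'_iff]
      intro b hb
      exact wp_pos μ (Finset.mem_filter.mp hb).2
    have hc₀le : ∀ x ∈ Ω', c₀ ≤ wp μ (seg x 0 n₀) := by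
      intro x hx
      exact Finset.inf'_le (wp μ)
        (show seg x 0 n₀ ∈ S from Finset.mem_filter.mpr ⟨Finset.mem_univ _, hsuppmem x hx n₀⟩)
    obtain ⟨n₁, hn₁⟩ := eventually_atTop.mp hFE
    -- choose r
    obtain ⟨r, hrbig⟩ := exists_nat_gt
      (max (2 * (Real.log c₀ - γp * n₀) / γp) ((n₁ : ℝ)))
    have hr1 : 2 * (Real.log c₀ - γp * n₀) / γp < (r : ℝ) :=
      lt_of_le_of_lt (le_max_left _ _) hrbig
    have hr2 : n₁ ≤ n₀ + r := by
      have : (n₁ : ℝ) < r := lt_of_le_of_lt (le_max_right _ _) hrbig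
      have := Nat.cast_lt.mp this
      omega
    have hrineq : γp * r / 2 < Real.log c₀ - γp * n₀ := by
      have hγ : γp < 0 := hγneg
      rw [div_lt_iff_of_neg hγ] at hr1
      linarith
    -- the bad point
    obtain ⟨y, hy, hnob⟩ := hcon r
    -- unique preimage: g = 1 along the orbit
    have hg1 : ∀ s : ℕ, s + 1 ≤ r → g (shift^[s] y) = 1 := by
      intro s hs
      have hz : shift^[s+1] y ∈ Ω' := hitmem (s+1) y hy
      have hu : shift^[s] y ∈ Ω' := hitmem s y hy
      have hsum := hgsum (shift^[s+1] y) hz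
      have hmem : cons (y s) (shift^[s+1] y) ∈ Ω' := by
        rw [cons_shift]; exact hu
      have honly : ∀ e : A, e ≠ y s →
          (if cons e (shift^[s+1] y) ∈ Ω' then g (cons e (shift^[s+1] y)) else 0) = 0 := by
        intro e he
        rw [if_neg]
        intro hmem'
        exact hnob (s+1) (by omega) (by omega) e (y s) he hmem' hmem
      rw [Finset.sum_eq_single (y s) (fun e _ he => honly e he) (by simp)] at hsum
      rw [if_pos hmem, cons_shift] at hsum
      exact hsum
    -- telescoping lower bound
    have hεlt1 : ε < 1 := by
      have := Real.exp_pos (γp / 2)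
      simp only [hε]; linarith
    have htel : ∀ t : ℕ, t ≤ r →
        (1 - ε)^t * c₀ ≤ wp μ (seg (shift^[r - t] y) 0 (n₀ + t)) := by
      intro t
      induction t with
      | zero =>
        intro _
        simpa using hc₀le (shift^[r] y) (hitmem r y hy)
      | succ t ih =>
        intro ht
        have hx : shift^[r - (t+1)] y ∈ Ω' := hitmem _ y hy
        have hlow := (stepb ε (n₀ + t) (hn₀ (n₀ + t) (by omega)) _ hx).2
        have hgx : g (shift^[r - (t+1)] y) = 1 := hg1 (r - (t+1)) (by omega)
        rw [hgx] at hlow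
        have hshift_eq : shift (shift^[r - (t+1)] y) = shift^[r - t] y := by
          have hrt : r - t = (r - (t+1)) + 1 := by omega
          rw [hrt, Function.iterate_succ_apply']
        rw [hshift_eq] at hlow
        have hih := ih (by omega)
        calc (1 - ε)^(t+1) * c₀ = (1 - ε) * ((1 - ε)^t * c₀) := by ring
          _ ≤ (1 - ε) * wp μ (seg (shift^[r - t] y) 0 (n₀ + t)) := by
              apply mul_le_mul_of_nonneg_left hih (by linarith)
          _ ≤ wp μ (seg (shift^[r - (t+1)] y) 0 (n₀ + t + 1)) := hlow
    have hfinal := htel r le_rfl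
    simp only [Nat.sub_self, Function.iterate_zero, id_eq] at hfinal
    -- FE bound
    have hpos : 0 < μ (cyl (seg y 0 (n₀ + r))) := hsuppmem y hy _
    have hFEb := hn₁ (n₀ + r) hr2 (seg y 0 (n₀ + r)) hpos
    -- combine
    have hεexp : (1 - ε)^r = Real.exp (γp * r / 2) := by
      rw [hε]
      rw [show (1 : ℝ) - (1 - Real.exp (γp / 2)) = Real.exp (γp / 2) by ring]
      rw [← Real.exp_nat_mul]
      congr 1
      ring
    rw [hεexp] at hfinal
    have hchain : Real.exp (γp * r / 2) * c₀ ≤ Real.exp (γp * ((n₀ : ℕ) + r : ℕ)) :=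
      le_trans hfinal hFEb
    have hlog := Real.log_le_log (by positivity) hchain
    rw [Real.log_mul (Real.exp_ne_zero _) (ne_of_gt hc₀pos), Real.log_exp,
      Real.log_exp] at hlog
    push_cast at hlog
    linarith
  · -- branching → (FE)
    rintro ⟨r0, hr⟩
    -- Ω' is compact
    have hclosed : IsClosed Ω' := by
      obtain ⟨m, F, hF⟩ := hSFT
      rw [hF]
      have heq : {x : ℕ → A | ∀ r : ℕ, seg x r m ∉ F} =
          ⋂ r : ℕ, (fun x : ℕ → A => seg x r m) ⁻¹' Fᶜ := by
        ext x
        simp [Set.mem_iInter]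
      rw [heq]
      refine isClosed_iInter fun r => ?_
      have hcont : Continuous (fun x : ℕ → A => seg x r m) :=
        continuous_pi fun i => continuous_apply _
      exact (isClosed_discrete Fᶜ).preimage hcont
    have hcomp : IsCompact Ω' := hclosed.isCompact
    obtain ⟨x₀, hx₀, hmin'⟩ := hcomp.exists_isMinOn hΩne hgcont
    have hmin : ∀ x ∈ Ω', g x₀ ≤ g x := fun x hx => hmin' hx
    set δ : ℝ := g x₀ with hδ
    have hδpos : 0 < δ := (hgrange x₀ hx₀).1
    have hδ1 : δ ≤ 1 := (hgrange x₀ hx₀).2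
    set R : ℕ := r0 + 1 with hRdef
    have hRpos : (0:ℝ) < R := by positivity
    -- in every window of length R the g value drops below 1 - δ somewhere
    have hbranch : ∀ y ∈ Ω', ∃ s : ℕ, s < R ∧ g (shift^[s] y) ≤ 1 - δ := by
      intro y hy
      obtain ⟨t, ht1, ht2, a, b, hab, ha, hb⟩ := hr y hy
      obtain ⟨s, rfl⟩ : ∃ s, t = s + 1 := ⟨t - 1, by omega⟩
      refine ⟨s, by omega, ?_⟩
      have hzmem : shift^[s+1] y ∈ Ω' := hitmem _ y hy
      have hmemys : cons (y s) (shift^[s+1] y) ∈ Ω' := by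
        rw [cons_shift]
        exact hitmem s y hy
      set c : A := if a = y s then b else a with hc
      have hcne : c ≠ y s := by
        rw [hc]
        split
        · rename_i h
          rw [← h]
          exact hab.symm
        · assumption
      have hcmem : cons c (shift^[s+1] y) ∈ Ω' := by
        rw [hc]
        split <;> assumption
      have hsum := hgsum (shift^[s+1] y) hzmem
      have hpair := Finset.sum_le_sum_of_subset_of_nonneg
        (Finset.subset_univ ({y s, c} : Finset A)) (f := fun e =>
          if cons e (shift^[s+1] y) ∈ Ω' then g (cons e (shift^[s+1] y)) else 0) ?_
      swap
      · intro e _ _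
        split
        · exact (hgrange _ (by assumption)).1.le
        · exact le_refl 0
      rw [Finset.sum_pair (Ne.symm hcne), hsum] at hpair
      rw [if_pos hmemys, if_pos hcmem] at hpair
      have hδc : δ ≤ g (cons c (shift^[s+1] y)) := hmin _ hcmem
      have hgys : cons (y s) (shift^[s+1] y) = shift^[s] y := cons_shift y s
      rw [hgys] at hpair
      linarith
    -- parameters
    set ε : ℝ := δ / (4 * R) with hεdef
    have hεpos : 0 < ε := by positivity
    obtain ⟨n₀, hn₀⟩ := eventually_atTop.mp (hgconv ε hεpos)
    set ρ : ℝ := 1 - δ/2 with hρdef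
    have hρpos : 0 < ρ := by rw [hρdef]; linarith
    have hρlt1 : ρ < 1 := by rw [hρdef]; linarith
    have hρnum : (1 + ε)^(R-1) * (1 - δ + ε) ≤ ρ := numeric_rho R (by omega) hδpos hδ1
    -- upper single step
    have stepU : ∀ n, n₀ ≤ n → ∀ x ∈ Ω',
        wp μ (seg x 0 (n+1)) ≤ (1 + ε) * wp μ (seg (shift x) 0 n) := by
      intro n hn x hx
      have h := (stepb ε n (hn₀ n hn) x hx).1
      refine h.trans (mul_le_mul_of_nonneg_right ?_ (wp_nonneg μ _))
      linarith [(hgrange x hx).2]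
    -- telescoping
    have tel : ∀ k n, n₀ ≤ n → ∀ y ∈ Ω',
        wp μ (seg y 0 (n+k)) ≤ (1+ε)^k * wp μ (seg (shift^[k] y) 0 n) := by
      intro k
      induction k with
      | zero =>
        intro n hn y hy
        simp
      | succ k ih =>
        intro n hn y hy
        have h1 : wp μ (seg y 0 ((n+k)+1)) ≤ (1+ε) * wp μ (seg (shift y) 0 (n+k)) :=
          stepU (n+k) (by omega) y hy
        have h2 := ih n hn (shift y) (hshiftmem y hy)
        calc wp μ (seg y 0 (n+(k+1))) = wp μ (seg y 0 ((n+k)+1)) := rfl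
          _ ≤ (1+ε) * wp μ (seg (shift y) 0 (n+k)) := h1
          _ ≤ (1+ε) * ((1+ε)^k * wp μ (seg (shift^[k] (shift y)) 0 n)) :=
              mul_le_mul_of_nonneg_left h2 (by linarith)
          _ = (1+ε)^(k+1) * wp μ (seg (shift^[k+1] y) 0 n) := by
              rw [← Function.iterate_succ_apply]
              ring
    -- window estimate
    have window : ∀ n, n₀ ≤ n → ∀ y ∈ Ω',
        wp μ (seg y 0 (n + R)) ≤ ρ * wp μ (seg (shift^[R] y) 0 n) := by
      intro n hn y hy
      obtain ⟨s, hsR, hgs⟩ := hbranch y hy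
      have e1 : n + R = (n + (R - s)) + s := by omega
      have t1 := tel s (n + (R - s)) (by omega) y hy
      have e2 : n + (R - s) = (n + (R - s - 1)) + 1 := by omega
      have st := (stepb ε (n + (R-s-1)) (hn₀ _ (by omega)) (shift^[s] y) (hitmem s y hy)).1
      have hsh : shift (shift^[s] y) = shift^[s+1] y :=
        (Function.iterate_succ_apply' shift s y).symm
      rw [hsh] at st
      have st' : wp μ (seg (shift^[s] y) 0 (n+(R-s-1)+1)) ≤
          (1 - δ + ε) * wp μ (seg (shift^[s+1] y) 0 (n+(R-s-1))) :=
        st.trans (mul_le_mul_of_nonneg_right (by linarith) (wp_nonneg μ _))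
      have t2 := tel (R - s - 1) n hn (shift^[s+1] y) (hitmem (s+1) y hy)
      have hsh2 : shift^[R - s - 1] (shift^[s+1] y) = shift^[R] y := by
        rw [← Function.iterate_add_apply]
        congr 1
        omega
      rw [hsh2] at t2
      have hpows : (0:ℝ) ≤ (1+ε)^s := by positivity
      have hfac : (0:ℝ) ≤ 1 - δ + ε := by linarith
      calc wp μ (seg y 0 (n+R)) = wp μ (seg y 0 ((n+(R-s))+s)) := by rw [← e1]
        _ ≤ (1+ε)^s * wp μ (seg (shift^[s] y) 0 (n+(R-s))) := t1
        _ = (1+ε)^s * wp μ (seg (shift^[s] y) 0 ((n+(R-s-1))+1)) := by rw [← e2]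
        _ ≤ (1+ε)^s * ((1-δ+ε) * wp μ (seg (shift^[s+1] y) 0 (n+(R-s-1)))) :=
            mul_le_mul_of_nonneg_left st' hpows
        _ ≤ (1+ε)^s * ((1-δ+ε) * ((1+ε)^(R-s-1) * wp μ (seg (shift^[R] y) 0 n))) :=
            mul_le_mul_of_nonneg_left (mul_le_mul_of_nonneg_left t2 hfac) hpows
        _ = ((1+ε)^s * (1+ε)^(R-s-1) * (1-δ+ε)) * wp μ (seg (shift^[R] y) 0 n) := by
            ring
        _ ≤ ρ * wp μ (seg (shift^[R] y) 0 n) := by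
            refine mul_le_mul_of_nonneg_right ?_ (wp_nonneg μ _)
            rw [← pow_add]
            have hss : s + (R - s - 1) = R - 1 := by omega
            rw [hss]
            exact hρnum
    -- blocks
    have blocks : ∀ K : ℕ, ∀ y ∈ Ω', wp μ (seg y 0 (n₀ + K*R)) ≤ ρ^K := by
      intro K
      induction K with
      | zero =>
        intro y hy
        have e0 : n₀ + 0*R = n₀ := by ring
        rw [e0, pow_zero]
        exact wp_le_one μ (seg y 0 n₀)
      | succ K ih =>
        intro y hy
        have e : n₀ + (K+1)*R = (n₀ + K*R) + R := by ring
        have w := window (n₀ + K*R) (by omega) y hy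
        have h2 := ih (shift^[R] y) (hitmem R y hy)
        calc wp μ (seg y 0 (n₀ + (K+1)*R)) = wp μ (seg y 0 ((n₀ + K*R) + R)) := by rw [← e]
          _ ≤ ρ * wp μ (seg (shift^[R] y) 0 (n₀ + K*R)) := w
          _ ≤ ρ * ρ^K := mul_le_mul_of_nonneg_left h2 hρpos.le
          _ = ρ^(K+1) := by ring
    -- conclude FE
    have hlogneg : Real.log ρ < 0 := Real.log_neg hρpos hρlt1
    refine ⟨Real.log ρ / (2*(R:ℝ)), div_neg_of_neg_of_pos hlogneg (by positivity), ?_⟩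
    filter_upwards [eventually_ge_atTop (2*(n₀ + R))] with n hn
    intro a ha
    obtain ⟨y, hy, hya⟩ := supp_extend μ ha
    have hyΩ : y ∈ Ω' := hsupp ▸ hy
    have haeq : seg y 0 n = a := by
      funext i
      simpa [seg] using hya i
    set K : ℕ := (n - n₀)/R with hKdef
    have hK1 : n₀ + K*R ≤ n := by
      have h := Nat.div_mul_le_self (n - n₀) R
      rw [← hKdef] at h
      generalize hM : K * R = M at h ⊢
      omega
    have hb := blocks K y hyΩ
    have hmono := wp_mono_prefix μ y hK1
    have hKlowN : n ≤ 2*(K*R) := by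
      have h2 := Nat.div_add_mod (n-n₀) R
      rw [← hKdef] at h2
      have h3 : (n-n₀) % R < R := Nat.mod_lt _ (by omega)
      have hcomm : 2*(K*R) = 2*(R*K) := by ring
      rw [hcomm]
      generalize hM : R * K = M at h2 ⊢
      omega
    have hexp : ρ^K ≤ Real.exp (Real.log ρ / (2*(R:ℝ)) * n) := by
      have hρK : ρ^K = Real.exp ((K:ℝ) * Real.log ρ) := by
        rw [Real.exp_nat_mul, Real.exp_log hρpos]
      rw [hρK, Real.exp_le_exp]
      have hKge : (n:ℝ)/(2*(R:ℝ)) ≤ (K:ℝ) := by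
        rw [div_le_iff₀ (by positivity)]
        have : (n:ℝ) ≤ 2*((K:ℝ)*(R:ℝ)) := by exact_mod_cast hKlowN
        linarith
      have hmm : (K:ℝ) * Real.log ρ ≤ ((n:ℝ)/(2*(R:ℝ))) * Real.log ρ := by
        nlinarith [hKge, hlogneg]
      calc (K:ℝ) * Real.log ρ ≤ ((n:ℝ)/(2*(R:ℝ))) * Real.log ρ := hmm
        _ = Real.log ρ / (2*(R:ℝ)) * n := by ring
    calc wp μ a = wp μ (seg y 0 n) := by rw [haeq]
      _ ≤ wp μ (seg y 0 (n₀ + K*R)) := hmono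
      _ ≤ ρ^K := hb
      _ ≤ Real.exp (Real.log ρ / (2*(R:ℝ)) * n) := hexp


end ZM
end
end
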